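/- arXiv:2003.03834 — 4 statements merged into one kernel-verified Lean document; each statement's English description precedes it below -/
import Mathlib

section
/- Let $\lambda>0$, $\xi=\sqrt{2\lambda}$, and for $\phi\ge0$ define $h_\phi(x)=|x|+\phi\big(\tfrac{|1-x|+|1+x|}{2}-|x|\big)$ and $H_\phi(x)=\int_{\mathbb{R}}h_\phi(y)\,\frac{\xi}{2}e^{-\xi|x-y|}\,dy$. Then: (i) $h_\phi$ is convex on $\mathbb{R}$ if and only if $\phi\le1$; (ii) the following are equivalent: $H_\phi$ is convex on $\mathbb{R}$; $H_\phi(x)\ge h_\phi(x)$ for all $x\in\mathbb{R}$; $\phi\le\frac{1}{1-e^{-\xi}}$. In particular, for $1<\phi\le\frac{1}{1-e^{-\xi}}$ the function $H_\phi$ is convex even though $h_\phi$ is not convex. -/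
open MeasureTheory ProbabilityTheory Real Set Filter
open scoped ENNReal NNReal

noncomputable section

namespace PoissonOS

/-- `h_φ(x) = |x| + φ ((|1-x| + |1+x|)/2 - |x|)`. -/
def hphi (ph x : ℝ) : ℝ := |x| + ph * ((|1 - x| + |1 + x|) / 2 - |x|)

/-- `H_φ(x) = ∫ h_φ(y) (ξ/2) e^{-ξ|x-y|} dy`, the resolvent of `h_φ`. -/
def Hphi (xi ph x : ℝ) : ℝ := ∫ y : ℝ, hphi ph y * (xi / 2 * Real.exp (-xi * |x - y|))

/-- `F(u) = |u| + e^{-ξ|u|}/ξ`, the resolvent of `|·|`. -/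
def Fx (xi u : ℝ) : ℝ := |u| + Real.exp (-(xi * |u|)) / xi

/-- Derivative of `Fx`. -/
def Fd (xi u : ℝ) : ℝ :=
  (Real.exp (xi * u) - Real.exp (-(xi * u))) / (1 + Real.exp (xi * |u|))

/-- Explicit formula for `Hphi`. -/
def Hex (xi ph x : ℝ) : ℝ :=
  (1 - ph) * Fx xi x + ph / 2 * Fx xi (x - 1) + ph / 2 * Fx xi (x + 1)

/-- Derivative of `Hex`. -/
def Hd (xi ph x : ℝ) : ℝ :=
  (1 - ph) * Fd xi x + ph / 2 * Fd xi (x - 1) + ph / 2 * Fd xi (x + 1)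

/-- Second derivative of `Hex`, divided by `ξ`. -/
def Qx (xi ph x : ℝ) : ℝ :=
  (1 - ph) * Real.exp (-(xi * |x|)) + ph / 2 * Real.exp (-(xi * |x - 1|))
    + ph / 2 * Real.exp (-(xi * |x + 1|))

lemma abs_ident (x : ℝ) : |1 - x| + |1 + x| = 2 * max |x| 1 := by
  rcases abs_cases x with ⟨h1, h2⟩ | ⟨h1, h2⟩ <;>
    rcases abs_cases (1 - x) with ⟨h3, h4⟩ | ⟨h3, h4⟩ <;>
      rcases abs_cases (1 + x) with ⟨h5, h6⟩ | ⟨h5, h6⟩ <;>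
        rcases max_cases |x| 1 with ⟨h7, h8⟩ | ⟨h7, h8⟩ <;> linarith

lemma hphi_eq (ph x : ℝ) :
    hphi ph x = (1 - ph) * |x| + ph / 2 * |x - 1| + ph / 2 * |x + 1| := by
  have e1 : |1 - x| = |x - 1| := abs_sub_comm 1 x
  have e2 : |1 + x| = |x + 1| := by rw [add_comm]
  unfold hphi; rw [e1, e2]; ring

lemma hphi_max (ph : ℝ) (hph : 0 ≤ ph) (x : ℝ) :
    hphi ph x = max |x| (ph + (1 - ph) * |x|) := by
  unfold hphi
  rw [abs_ident]
  rcases max_cases |x| 1 with ⟨h1, h2⟩ | ⟨h1, h2⟩ <;>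
    rcases max_cases |x| (ph + (1 - ph) * |x|) with ⟨h3, h4⟩ | ⟨h3, h4⟩ <;> nlinarith

lemma Fd_of_nonneg {xi u : ℝ} (hu : 0 ≤ u) : Fd xi u = 1 - Real.exp (-(xi * u)) := by
  unfold Fd
  rw [abs_of_nonneg hu, Real.exp_neg]
  have h1 : (0:ℝ) < Real.exp (xi * u) := Real.exp_pos _
  have h2 : (0:ℝ) < 1 + Real.exp (xi * u) := by positivity
  field_simp
  ring

lemma Fd_of_nonpos {xi u : ℝ} (hu : u ≤ 0) : Fd xi u = Real.exp (xi * u) - 1 := by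
  unfold Fd
  rw [abs_of_nonpos hu, mul_neg, Real.exp_neg]
  have h1 : (0:ℝ) < Real.exp (xi * u) := Real.exp_pos _
  have h2 : 0 < 1 + (Real.exp (xi * u))⁻¹ := by positivity
  field_simp
  ring

lemma Fd_neg_arg (xi u : ℝ) : Fd xi (-u) = -Fd xi u := by
  unfold Fd
  rw [abs_neg, mul_neg, neg_neg, ← neg_div]
  ring_nf

lemma Fd_zero (xi : ℝ) : Fd xi 0 = 0 := by simp [Fd]

lemma Fd_continuous (xi : ℝ) : Continuous (Fd xi) := by
  apply Continuous.div
  · continuity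
  · continuity
  · intro u; positivity

lemma Fx_even (xi u : ℝ) : Fx xi (-u) = Fx xi u := by simp [Fx]

lemma hasDerivAt_Fx {xi : ℝ} (hxi : 0 < xi) (u : ℝ) : HasDerivAt (Fx xi) (Fd xi u) u := by
  have hpos : ∀ v : ℝ, HasDerivAt (fun w : ℝ => w + Real.exp (-(xi * w)) / xi)
      (1 - Real.exp (-(xi * v))) v := by
    intro v
    have h1 : HasDerivAt (fun w : ℝ => -(xi * w)) (-xi) v := by
      exact ((hasDerivAt_id v).const_mul xi).neg.congr_deriv (by ring)
    have h2 := (h1.exp.div_const xi)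
    have h3 := (hasDerivAt_id v).add h2
    refine h3.congr_deriv ?_
    field_simp
    ring
  have hneg : ∀ v : ℝ, HasDerivAt (fun w : ℝ => -w + Real.exp (xi * w) / xi)
      (Real.exp (xi * v) - 1) v := by
    intro v
    have h1 : HasDerivAt (fun w : ℝ => xi * w) xi v := by
      simpa using (hasDerivAt_id v).const_mul xi
    have h2 := h1.exp.div_const xi
    have h3 := (hasDerivAt_id v).neg.add h2
    refine h3.congr_deriv ?_
    field_simp
    ring
  rcases lt_trichotomy u 0 with hu | hu | hu
  · have heq : Fx xi =ᶠ[nhds u] fun w : ℝ => -w + Real.exp (xi * w) / xi := by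
      filter_upwards [isOpen_Iio.mem_nhds (show u ∈ Iio (0:ℝ) from hu)] with w hw
      simp only [Fx, abs_of_neg (show w < 0 from hw), mul_neg, neg_neg]
    rw [Fd_of_nonpos hu.le]
    exact (hneg u).congr_of_eventuallyEq heq
  · subst hu
    rw [Fd_zero]
    rw [← hasDerivWithinAt_univ, ← Set.Iic_union_Ici (a := (0:ℝ))]
    apply HasDerivWithinAt.union
    · have h := ((hneg 0).sub_const 0).hasDerivWithinAt (s := Set.Iic (0:ℝ))
      have h2 : HasDerivWithinAt (fun w : ℝ => -w + Real.exp (xi * w) / xi)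
          0 (Set.Iic (0:ℝ)) 0 := by
        simpa using (hneg 0).hasDerivWithinAt.congr_deriv (by simp)
      apply h2.congr
      · intro w hw
        simp only [Fx, abs_of_nonpos (show w ≤ 0 from hw), mul_neg, neg_neg]
      · simp [Fx]
    · have h2 : HasDerivWithinAt (fun w : ℝ => w + Real.exp (-(xi * w)) / xi)
          0 (Set.Ici (0:ℝ)) 0 := by
        simpa using (hpos 0).hasDerivWithinAt.congr_deriv (by simp)
      apply h2.congr
      · intro w hw
        simp only [Fx, abs_of_nonneg (show 0 ≤ w from hw)]
      · simp [Fx]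
  · have heq : Fx xi =ᶠ[nhds u] fun w : ℝ => w + Real.exp (-(xi * w)) / xi := by
      filter_upwards [isOpen_Ioi.mem_nhds (show u ∈ Ioi (0:ℝ) from hu)] with w hw
      simp only [Fx, abs_of_pos (show 0 < w from hw)]
    rw [Fd_of_nonneg hu.le]
    exact (hpos u).congr_of_eventuallyEq heq

lemma hasDerivAt_Fd {xi : ℝ} (hxi : 0 < xi) {u : ℝ} (hu : u ≠ 0) :
    HasDerivAt (Fd xi) (xi * Real.exp (-(xi * |u|))) u := by
  rcases hu.lt_or_gt with hu | hu
  · have heq : Fd xi =ᶠ[nhds u] fun w : ℝ => Real.exp (xi * w) - 1 := by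
      filter_upwards [isOpen_Iio.mem_nhds (show u ∈ Iio (0:ℝ) from hu)] with w hw
      exact Fd_of_nonpos (le_of_lt hw)
    have h1 : HasDerivAt (fun w : ℝ => xi * w) xi u := by
      simpa using (hasDerivAt_id u).const_mul xi
    have h2 := (h1.exp).sub_const 1
    have h3 : Real.exp (xi * u) * xi = xi * Real.exp (-(xi * |u|)) := by
      rw [abs_of_neg hu]; ring_nf
    rw [← h3]
    exact h2.congr_of_eventuallyEq heq
  · have heq : Fd xi =ᶠ[nhds u] fun w : ℝ => 1 - Real.exp (-(xi * w)) := by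
      filter_upwards [isOpen_Ioi.mem_nhds (show u ∈ Ioi (0:ℝ) from hu)] with w hw
      exact Fd_of_nonneg (le_of_lt hw)
    have h1 : HasDerivAt (fun w : ℝ => -(xi * w)) (-xi) u := by
      exact ((hasDerivAt_id u).const_mul xi).neg.congr_deriv (by ring)
    have h2 := (hasDerivAt_const u (1:ℝ)).sub h1.exp
    have h3 : (0:ℝ) - Real.exp (-(xi * u)) * (-xi) = xi * Real.exp (-(xi * |u|)) := by
      rw [abs_of_pos hu]; ring
    rw [← h3]
    exact h2.congr_of_eventuallyEq heq


lemma tail_integral {xi : ℝ} (hxi : 0 < xi) {x : ℝ} (hx : 0 ≤ x) :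
    IntegrableOn (fun y : ℝ => y * Real.exp (-(xi * y))) (Ioi x) ∧
      ∫ y in Ioi x, y * Real.exp (-(xi * y))
        = (x / xi + 1 / xi ^ 2) * Real.exp (-(xi * x)) := by
  set g : ℝ → ℝ := fun y => -(y / xi + 1 / xi ^ 2) * Real.exp (-(xi * y)) with hg
  have hderiv : ∀ y : ℝ, HasDerivAt g (y * Real.exp (-(xi * y))) y := by
    intro y
    have h1 : HasDerivAt (fun w : ℝ => -(xi * w)) (-xi) y := by
      exact ((hasDerivAt_id y).const_mul xi).neg.congr_deriv (by ring)
    have h2 : HasDerivAt (fun w : ℝ => -(w / xi + 1 / xi ^ 2)) (-(1 / xi)) y :=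
      (((hasDerivAt_id y).div_const xi).add_const (1 / xi ^ 2)).neg
    have h3 := h2.mul h1.exp
    refine h3.congr_deriv ?_
    field_simp
    ring
  have htend : Tendsto g atTop (nhds 0) := by
    have T0 : Tendsto (fun y : ℝ => xi * y) atTop atTop :=
      Tendsto.const_mul_atTop hxi tendsto_id
    have T1 : Tendsto (fun y : ℝ => (xi * y) * Real.exp (-(xi * y))) atTop (nhds 0) := by
      have := (Real.tendsto_pow_mul_exp_neg_atTop_nhds_zero 1).comp T0
      simpa [Function.comp_def] using this
    have T2 : Tendsto (fun y : ℝ => Real.exp (-(xi * y))) atTop (nhds 0) := by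
      have h : Tendsto (fun y : ℝ => -(xi * y)) atTop atBot := tendsto_neg_atBot_iff.mpr T0
      exact Real.tendsto_exp_atBot.comp h
    have T3 : Tendsto (fun y : ℝ =>
        -(1 / xi ^ 2) * ((xi * y) * Real.exp (-(xi * y))) + -(1 / xi ^ 2) * Real.exp (-(xi * y)))
        atTop (nhds 0) := by
      have := (T1.const_mul (-(1 / xi ^ 2))).add (T2.const_mul (-(1 / xi ^ 2)))
      simpa [Function.comp_def] using this
    apply T3.congr
    intro y
    simp only [hg]
    field_simp
    ring
  have hpos : ∀ y ∈ Ioi x, 0 ≤ y * Real.exp (-(xi * y)) := by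
    intro y hy
    have : 0 < y := lt_of_le_of_lt hx hy
    positivity
  have hint : IntegrableOn (fun y : ℝ => y * Real.exp (-(xi * y))) (Ioi x) :=
    integrableOn_Ioi_deriv_of_nonneg' (fun y _ => hderiv y) hpos htend
  refine ⟨hint, ?_⟩
  rw [integral_Ioi_of_hasDerivAt_of_tendsto' (fun y _ => hderiv y) hint htend]
  simp only [hg]
  ring

lemma master_nonneg {xi : ℝ} (hxi : 0 < xi) {x : ℝ} (hx : 0 ≤ x) :
    Integrable (fun y : ℝ => |y| * (xi / 2 * Real.exp (-(xi * |x - y|)))) ∧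
      ∫ y : ℝ, |y| * (xi / 2 * Real.exp (-(xi * |x - y|))) = Fx xi x := by
  set f : ℝ → ℝ := fun y => |y| * (xi / 2 * Real.exp (-(xi * |x - y|))) with hf
  have hcont : Continuous f := by
    apply Continuous.mul (continuous_abs)
    exact (continuous_const.mul ((continuous_const.mul
      ((continuous_const.sub continuous_id).abs)).neg.rexp))
  have hexpne : Real.exp (xi * x) ≠ 0 := (Real.exp_pos _).ne'
  -- Iic 0 piece
  have eqI : ∀ z ∈ Ioi (0:ℝ), f (-z)
      = (xi / 2 * Real.exp (-(xi * x))) * (z * Real.exp (-(xi * z))) := by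
    intro z hz
    have hz' : (0:ℝ) < z := hz
    have h1 : |(-z : ℝ)| = z := by rw [abs_neg, abs_of_pos hz']
    have h2 : |x - -z| = x + z := by rw [sub_neg_eq_add, abs_of_nonneg (by linarith)]
    simp only [hf, h1, h2]
    rw [show -(xi * (x + z)) = -(xi * x) + -(xi * z) by ring, Real.exp_add]
    ring
  have hIoi0 : IntegrableOn (fun z => f (-z)) (Ioi (0:ℝ)) := by
    apply IntegrableOn.congr_fun _ (fun z hz => (eqI z hz).symm) measurableSet_Ioi
    exact ((tail_integral hxi le_rfl).1.const_mul _)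
  have intIic : IntegrableOn f (Iic 0) := by
    have m : MeasurableEmbedding fun y : ℝ => -y :=
      (Homeomorph.neg ℝ).measurableEmbedding
    have h : IntegrableOn f (Iic 0) (Measure.map (fun y : ℝ => -y) volume) := by
      rw [m.integrableOn_map_iff]
      simp_rw [Function.comp_def, neg_preimage, neg_Iic, neg_zero]
      exact Iff.mpr integrableOn_Ici_iff_integrableOn_Ioi hIoi0
    rwa [Measure.map_neg_eq_self] at h
  have valIic : ∫ y in Iic (0:ℝ), f y
      = (xi / 2 * Real.exp (-(xi * x))) * (1 / xi ^ 2) := by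
    have h0 := integral_comp_neg_Ioi (0:ℝ) f
    rw [neg_zero] at h0
    rw [← h0, setIntegral_congr_fun measurableSet_Ioi eqI, integral_const_mul,
      (tail_integral hxi le_rfl).2]
    norm_num
  -- Ioc 0 x piece
  have intMid : IntegrableOn f (Ioc 0 x) := hcont.integrableOn_Ioc
  have eqMid : EqOn f
      (fun y => (xi / 2 * Real.exp (-(xi * x))) * (y * Real.exp (xi * y))) (Icc 0 x) := by
    intro y hy
    have h1 : |y| = y := abs_of_nonneg hy.1
    have h2 : |x - y| = x - y := abs_of_nonneg (by linarith [hy.2])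
    simp only [hf, h1, h2]
    rw [show -(xi * (x - y)) = -(xi * x) + xi * y by ring, Real.exp_add]
    ring
  have valMid : ∫ y in Ioc 0 x, f y
      = (xi / 2 * Real.exp (-(xi * x)))
        * ((x / xi - 1 / xi ^ 2) * Real.exp (xi * x) - (0 / xi - 1 / xi ^ 2) * Real.exp (xi * 0)) := by
    rw [← intervalIntegral.integral_of_le hx]
    rw [intervalIntegral.integral_congr (g := fun y =>
      (xi / 2 * Real.exp (-(xi * x))) * (y * Real.exp (xi * y)))
      (by rw [uIcc_of_le hx]; exact eqMid)]
    rw [intervalIntegral.integral_const_mul]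
    congr 1
    have hG : ∀ y : ℝ, HasDerivAt (fun w : ℝ => (w / xi - 1 / xi ^ 2) * Real.exp (xi * w))
        (y * Real.exp (xi * y)) y := by
      intro y
      have h1 : HasDerivAt (fun w : ℝ => xi * w) xi y := by
        simpa using (hasDerivAt_id y).const_mul xi
      have h2 : HasDerivAt (fun w : ℝ => w / xi - 1 / xi ^ 2) (1 / xi) y := by
        exact ((hasDerivAt_id y).div_const xi).sub_const (1 / xi ^ 2)
      have h3 := h2.mul h1.exp
      refine h3.congr_deriv ?_
      field_simp
      ring
    rw [intervalIntegral.integral_eq_sub_of_hasDerivAt (fun y _ => hG y)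
      ((continuous_id.mul (continuous_const.mul continuous_id).rexp).intervalIntegrable 0 x)]
  -- Ioi x piece
  have eqIoi : ∀ y ∈ Ioi x, f y
      = (xi / 2 * Real.exp (xi * x)) * (y * Real.exp (-(xi * y))) := by
    intro y hy
    have hy' : x < y := hy
    have h1 : |y| = y := abs_of_nonneg (by linarith)
    have h2 : |x - y| = y - x := by rw [abs_sub_comm, abs_of_nonneg (by linarith)]
    simp only [hf, h1, h2]
    rw [show -(xi * (y - x)) = xi * x + -(xi * y) by ring, Real.exp_add]
    ring
  have intIoi : IntegrableOn f (Ioi x) := by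
    apply IntegrableOn.congr_fun _ (fun y hy => (eqIoi y hy).symm) measurableSet_Ioi
    exact ((tail_integral hxi hx).1.const_mul _)
  have valIoi : ∫ y in Ioi x, f y
      = (xi / 2 * Real.exp (xi * x)) * ((x / xi + 1 / xi ^ 2) * Real.exp (-(xi * x))) := by
    rw [setIntegral_congr_fun measurableSet_Ioi eqIoi, integral_const_mul,
      (tail_integral hxi hx).2]
  -- assembly
  have intIoi0 : IntegrableOn f (Ioi 0) := by
    rw [← Ioc_union_Ioi_eq_Ioi hx]
    exact intMid.union intIoi
  have hint : Integrable f := by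
    have h := intIic.union intIoi0
    rwa [Iic_union_Ioi, integrableOn_univ] at h
  refine ⟨hint, ?_⟩
  have split1 : ∫ y : ℝ, f y = (∫ y in Iic (0:ℝ), f y) + ∫ y in Ioi (0:ℝ), f y := by
    rw [← setIntegral_univ (f := f), ← Iic_union_Ioi (a := (0:ℝ)),
      setIntegral_union (Iic_disjoint_Ioi le_rfl) measurableSet_Ioi intIic intIoi0]
  have split2 : ∫ y in Ioi (0:ℝ), f y = (∫ y in Ioc (0:ℝ) x, f y) + ∫ y in Ioi x, f y := by
    rw [← Ioc_union_Ioi_eq_Ioi hx,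
      setIntegral_union Ioc_disjoint_Ioi_same measurableSet_Ioi intMid intIoi]
  rw [split1, split2, valIic, valMid, valIoi]
  unfold Fx
  rw [abs_of_nonneg hx]
  simp only [Real.exp_neg, mul_zero, Real.exp_zero]
  field_simp
  ring


lemma master {xi : ℝ} (hxi : 0 < xi) (x : ℝ) :
    Integrable (fun y : ℝ => |y| * (xi / 2 * Real.exp (-(xi * |x - y|)))) ∧
      ∫ y : ℝ, |y| * (xi / 2 * Real.exp (-(xi * |x - y|))) = Fx xi x := by
  rcases le_total 0 x with hx | hx
  · exact master_nonneg hxi hx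
  · have h := master_nonneg hxi (show (0:ℝ) ≤ -x by linarith)
    have key : (fun y : ℝ => |y| * (xi / 2 * Real.exp (-(xi * |x - y|))))
        = fun y : ℝ => |(-y)| * (xi / 2 * Real.exp (-(xi * |(-x) - (-y)|))) := by
      funext y
      rw [abs_neg, show (-x) - (-y) = -(x - y) by ring, abs_neg]
    constructor
    · rw [key]
      exact h.1.comp_neg
    · rw [key]
      rw [integral_neg_eq_self (fun y : ℝ => |y| * (xi / 2 * Real.exp (-(xi * |(-x) - y|)))) volume]
      rw [h.2]
      unfold Fx
      rw [abs_neg]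

lemma master_shift {xi : ℝ} (hxi : 0 < xi) (x c : ℝ) :
    Integrable (fun y : ℝ => |y - c| * (xi / 2 * Real.exp (-(xi * |x - y|)))) ∧
      ∫ y : ℝ, |y - c| * (xi / 2 * Real.exp (-(xi * |x - y|))) = Fx xi (x - c) := by
  have h := master hxi (x - c)
  have key : (fun y : ℝ => |y - c| * (xi / 2 * Real.exp (-(xi * |x - y|))))
      = fun y : ℝ => |y - c| * (xi / 2 * Real.exp (-(xi * |(x - c) - (y - c)|))) := by
    funext y
    congr 3
    ring_nf
  constructor
  · rw [key]
    exact h.1.comp_sub_right c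
  · rw [key]
    have := integral_sub_right_eq_self (μ := (volume : Measure ℝ))
      (fun z : ℝ => |z| * (xi / 2 * Real.exp (-(xi * |(x - c) - z|)))) c
    rw [this, h.2]

lemma Hphi_eq_Hex {xi : ℝ} (hxi : 0 < xi) (ph : ℝ) : Hphi xi ph = Hex xi ph := by
  funext x
  have h0 := master hxi x
  have h1 := master_shift hxi x 1
  have h2 := master_shift hxi x (-1)
  unfold Hphi
  have key : (fun y : ℝ => hphi ph y * (xi / 2 * Real.exp (-xi * |x - y|)))
      = fun y : ℝ => (1 - ph) * (|y| * (xi / 2 * Real.exp (-(xi * |x - y|))))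
          + ph / 2 * (|y - 1| * (xi / 2 * Real.exp (-(xi * |x - y|))))
          + ph / 2 * (|y - (-1)| * (xi / 2 * Real.exp (-(xi * |x - y|)))) := by
    funext y
    rw [hphi_eq, sub_neg_eq_add, neg_mul]
    ring
  rw [key]
  have i0 : Integrable (fun y : ℝ => (1 - ph) * (|y| * (xi / 2 * Real.exp (-(xi * |x - y|))))) :=
    h0.1.const_mul _
  have i1 : Integrable (fun y : ℝ => ph / 2 * (|y - 1| * (xi / 2 * Real.exp (-(xi * |x - y|))))) :=
    h1.1.const_mul _
  have i2 : Integrable (fun y : ℝ =>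
      ph / 2 * (|y - (-1)| * (xi / 2 * Real.exp (-(xi * |x - y|))))) := h2.1.const_mul _
  have i01 : Integrable (fun y : ℝ =>
      (1 - ph) * (|y| * (xi / 2 * Real.exp (-(xi * |x - y|))))
        + ph / 2 * (|y - 1| * (xi / 2 * Real.exp (-(xi * |x - y|))))) := by
    exact i0.add i1
  rw [integral_add i01 i2, integral_add i0 i1,
    integral_const_mul, integral_const_mul, integral_const_mul, h0.2, h1.2, h2.2]
  unfold Hex
  rw [sub_neg_eq_add]


/-! ### Analysis of `Qx` -/

lemma Qx_even (xi ph x : ℝ) : Qx xi ph (-x) = Qx xi ph x := by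
  unfold Qx
  rw [abs_neg, show -x - 1 = -(x + 1) by ring, abs_neg, show -x + 1 = -(x - 1) by ring, abs_neg]
  ring

lemma Qx_rep01 {xi : ℝ} (ph : ℝ) {x : ℝ} (hx : 0 ≤ x) (hx1 : x ≤ 1) :
    Qx xi ph x = ((1 - ph) * Real.exp xi + ph / 2 * (Real.exp (xi * x) ^ 2 + 1))
      / (Real.exp (xi * x) * Real.exp xi) := by
  unfold Qx
  rw [abs_of_nonneg hx, abs_of_nonpos (by linarith : x - 1 ≤ 0),
    abs_of_nonneg (by linarith : (0:ℝ) ≤ x + 1)]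
  rw [show -(xi * -(x - 1)) = xi * x - xi by ring,
    show -(xi * (x + 1)) = -(xi * x) + -xi by ring,
    Real.exp_sub, Real.exp_add, Real.exp_neg, Real.exp_neg]
  have h1 : Real.exp (xi * x) ≠ 0 := (Real.exp_pos _).ne'
  have h2 : Real.exp xi ≠ 0 := (Real.exp_pos _).ne'
  field_simp
  ring

lemma Qx_rep1i {xi : ℝ} (ph : ℝ) {x : ℝ} (hx : 1 ≤ x) :
    Qx xi ph x = ((1 - ph) * Real.exp xi + ph / 2 * (Real.exp xi ^ 2 + 1))
      / (Real.exp (xi * x) * Real.exp xi) := by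
  unfold Qx
  rw [abs_of_nonneg (by linarith : (0:ℝ) ≤ x), abs_of_nonneg (by linarith : (0:ℝ) ≤ x - 1),
    abs_of_nonneg (by linarith : (0:ℝ) ≤ x + 1)]
  rw [show -(xi * (x - 1)) = -(xi * x) + xi by ring,
    show -(xi * (x + 1)) = -(xi * x) + -xi by ring,
    Real.exp_add, Real.exp_add, Real.exp_neg, Real.exp_neg]
  have h1 : Real.exp (xi * x) ≠ 0 := (Real.exp_pos _).ne'
  have h2 : Real.exp xi ≠ 0 := (Real.exp_pos _).ne'
  field_simp
  ring

lemma cond_mul (xi ph : ℝ) (hcond : ph * (1 - Real.exp (-xi)) ≤ 1) :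
    ph * (Real.exp xi - 1) ≤ Real.exp xi := by
  rw [Real.exp_neg] at hcond
  have h1 : (0:ℝ) < Real.exp xi := Real.exp_pos _
  have h2 : ph * (Real.exp xi * (Real.exp xi)⁻¹) = ph := by
    rw [mul_inv_cancel₀ h1.ne', mul_one]
  nlinarith [mul_le_mul_of_nonneg_left hcond h1.le, h2]

lemma Qx_nonneg {xi ph : ℝ} (hxi : 0 < xi) (hph : 0 ≤ ph)
    (hcond : ph * (1 - Real.exp (-xi)) ≤ 1) : ∀ x, 0 ≤ Qx xi ph x := by
  have key : ∀ x, 0 ≤ x → 0 ≤ Qx xi ph x := by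
    intro x hx
    have hcond' := cond_mul xi ph hcond
    have hE1 : (0:ℝ) < Real.exp xi := Real.exp_pos _
    have hA : (1:ℝ) ≤ Real.exp (xi * x) := Real.one_le_exp (by positivity)
    rcases le_total x 1 with hx1 | hx1
    · rw [Qx_rep01 ph hx hx1]
      apply div_nonneg _ (by positivity)
      have hA2 : (1:ℝ) ≤ Real.exp (xi * x) ^ 2 := by nlinarith
      have h2 : ph ≤ ph * Real.exp (xi * x) ^ 2 := by nlinarith
      nlinarith [hcond', h2]
    · rw [Qx_rep1i ph hx1]
      apply div_nonneg _ (by positivity)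
      nlinarith [sq_nonneg (Real.exp xi - 1), hE1, hph]
  intro x
  rcases le_total 0 x with hx | hx
  · exact key x hx
  · have := key (-x) (by linarith)
    rwa [Qx_even] at this

lemma Qx_neg_exists {xi ph : ℝ} (hxi : 0 < xi) (hph1 : 1 < ph)
    (hcond : 1 < ph * (1 - Real.exp (-xi))) :
    ∃ t0 : ℝ, 0 < t0 ∧ t0 ≤ 1 / 2 ∧ ∀ x, 0 < x → x ≤ t0 → Qx xi ph x < 0 := by
  have hph0 : (0:ℝ) < ph := by linarith
  have hE1 : (0:ℝ) < Real.exp xi := Real.exp_pos _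
  set eps : ℝ := ph * (1 - Real.exp (-xi)) - 1 with heps
  have hepspos : 0 < eps := by simp only [heps]; linarith
  set del : ℝ := 2 * eps * Real.exp xi / ph with hdel
  have hdelpos : 0 < del := by positivity
  set L : ℝ := Real.log (1 + del) / (2 * xi) with hL
  have hLpos : 0 < L := by
    apply div_pos (Real.log_pos (by linarith)) (by linarith)
  refine ⟨min (1/2) (L/2), lt_min (by norm_num) (by linarith), min_le_left _ _, ?_⟩
  intro x hx0 hxt
  have hx1 : x ≤ 1 := le_trans hxt (le_trans (min_le_left _ _) (by norm_num))
  have hxL : x < L := lt_of_le_of_lt (le_trans hxt (min_le_right _ _)) (by linarith)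
  have hA2 : Real.exp (xi * x) ^ 2 < 1 + del := by
    rw [sq, ← Real.exp_add]
    calc Real.exp (xi * x + xi * x) < Real.exp (Real.log (1 + del)) := by
          apply Real.exp_lt_exp.mpr
          have : xi * x + xi * x = 2 * xi * x := by ring
          rw [this]
          calc 2 * xi * x < 2 * xi * L := by
                apply mul_lt_mul_of_pos_left hxL (by linarith)
            _ = Real.log (1 + del) := by
                rw [hL]; field_simp
      _ = 1 + del := Real.exp_log (by linarith)
  rw [Qx_rep01 ph hx0.le hx1]
  apply div_neg_of_neg_of_pos _ (by positivity)
  have hinv : Real.exp xi * (Real.exp xi)⁻¹ = 1 := mul_inv_cancel₀ hE1.ne'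
  have hdel' : ph * del = 2 * eps * Real.exp xi := by
    rw [hdel]; field_simp
  have heps' : eps * 1 = ph * (1 - (Real.exp xi)⁻¹) - 1 := by
    rw [heps, Real.exp_neg]; ring
  nlinarith [mul_lt_mul_of_pos_left hA2 (by positivity : (0:ℝ) < ph / 2), hinv, hE1]

/-! ### Derivatives of `Hex` and `Hd` -/

lemma hasDerivAt_Hex {xi : ℝ} (hxi : 0 < xi) (ph x : ℝ) :
    HasDerivAt (Hex xi ph) (Hd xi ph x) x := by
  have h0 := (hasDerivAt_Fx hxi x).const_mul (1 - ph)
  have h1 : HasDerivAt (fun w : ℝ => Fx xi (w - 1)) (Fd xi (x - 1)) x := by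
    have := (hasDerivAt_Fx hxi (x - 1)).comp x ((hasDerivAt_id x).sub_const 1)
    simpa [Function.comp_def] using this
  have h2 : HasDerivAt (fun w : ℝ => Fx xi (w + 1)) (Fd xi (x + 1)) x := by
    have := (hasDerivAt_Fx hxi (x + 1)).comp x ((hasDerivAt_id x).add_const 1)
    simpa [Function.comp_def] using this
  exact (h0.add (h1.const_mul (ph / 2))).add (h2.const_mul (ph / 2))

lemma hasDerivAt_Hd {xi : ℝ} (hxi : 0 < xi) (ph : ℝ) {x : ℝ} (h0 : x ≠ 0)
    (h1 : x - 1 ≠ 0) (h2 : x + 1 ≠ 0) :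
    HasDerivAt (Hd xi ph) (xi * Qx xi ph x) x := by
  have d0 := (hasDerivAt_Fd hxi h0).const_mul (1 - ph)
  have d1 : HasDerivAt (fun w : ℝ => Fd xi (w - 1)) (xi * Real.exp (-(xi * |x - 1|))) x := by
    have := (hasDerivAt_Fd hxi h1).comp x ((hasDerivAt_id x).sub_const 1)
    simpa [Function.comp_def] using this
  have d2 : HasDerivAt (fun w : ℝ => Fd xi (w + 1)) (xi * Real.exp (-(xi * |x + 1|))) x := by
    have := (hasDerivAt_Fd hxi h2).comp x ((hasDerivAt_id x).add_const 1)
    simpa [Function.comp_def] using this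
  have := (d0.add (d1.const_mul (ph / 2))).add (d2.const_mul (ph / 2))
  refine this.congr_deriv ?_
  unfold Qx
  ring

lemma Hd_continuous (xi ph : ℝ) : Continuous (Hd xi ph) := by
  unfold Hd
  apply Continuous.add
  apply Continuous.add
  · exact continuous_const.mul (Fd_continuous xi)
  · exact continuous_const.mul ((Fd_continuous xi).comp (continuous_id.sub continuous_const))
  · exact continuous_const.mul ((Fd_continuous xi).comp (continuous_id.add continuous_const))

lemma Hd_odd (xi ph x : ℝ) : Hd xi ph (-x) = -Hd xi ph x := by
  unfold Hd
  rw [show -x - 1 = -(x + 1) by ring, show -x + 1 = -(x - 1) by ring,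
    Fd_neg_arg, Fd_neg_arg, Fd_neg_arg]
  ring

lemma Hd_zero (xi ph : ℝ) : Hd xi ph 0 = 0 := by
  have h := Hd_odd xi ph 0
  rw [neg_zero] at h
  linarith

lemma Hd_monotone {xi ph : ℝ} (hxi : 0 < xi) (hph : 0 ≤ ph)
    (hcond : ph * (1 - Real.exp (-xi)) ≤ 1) : Monotone (Hd xi ph) := by
  have hQ := Qx_nonneg hxi hph hcond
  have m1 : MonotoneOn (Hd xi ph) (Icc 0 1) := by
    apply monotoneOn_of_deriv_nonneg (convex_Icc 0 1) (Hd_continuous xi ph).continuousOn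
    · rw [interior_Icc]
      intro x hx
      exact (hasDerivAt_Hd hxi ph (ne_of_gt hx.1) (by intro h; linarith [hx.2, sub_eq_zero.mp h])
        (by intro h; linarith [hx.1, add_eq_zero_iff_eq_neg.mp h])).differentiableAt.differentiableWithinAt
    · rw [interior_Icc]
      intro x hx
      rw [(hasDerivAt_Hd hxi ph (ne_of_gt hx.1) (by intro h; linarith [hx.2, sub_eq_zero.mp h])
        (by intro h; linarith [hx.1, add_eq_zero_iff_eq_neg.mp h])).deriv]
      exact mul_nonneg hxi.le (hQ x)
  have m2 : MonotoneOn (Hd xi ph) (Ici 1) := by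
    apply monotoneOn_of_deriv_nonneg (convex_Ici 1) (Hd_continuous xi ph).continuousOn
    · rw [interior_Ici]
      intro x hx
      have hx' : (1:ℝ) < x := hx
      exact (hasDerivAt_Hd hxi ph (by intro h; linarith) (by intro h; linarith [sub_eq_zero.mp h])
        (by intro h; linarith [add_eq_zero_iff_eq_neg.mp h])).differentiableAt.differentiableWithinAt
    · rw [interior_Ici]
      intro x hx
      have hx' : (1:ℝ) < x := hx
      rw [(hasDerivAt_Hd hxi ph (by intro h; linarith) (by intro h; linarith [sub_eq_zero.mp h])
        (by intro h; linarith [add_eq_zero_iff_eq_neg.mp h])).deriv]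
      exact mul_nonneg hxi.le (hQ x)
  have m0 : MonotoneOn (Hd xi ph) (Ici 0) := by
    intro a ha b hb hab
    rcases le_total b 1 with hb1 | hb1
    · exact m1 ⟨ha, le_trans hab hb1⟩ ⟨hb, hb1⟩ hab
    · rcases le_total a 1 with ha1 | ha1
      · exact le_trans (m1 ⟨ha, ha1⟩ ⟨zero_le_one, le_rfl⟩ ha1) (m2 (Set.mem_Ici.mpr le_rfl) hb1 hb1)
      · exact m2 ha1 hb1 hab
  intro a b hab
  rcases le_total 0 a with ha | ha
  · exact m0 ha (le_trans ha hab) hab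
  · rcases le_total b 0 with hb | hb
    · have h := m0 (Set.mem_Ici.mpr (by linarith : (0:ℝ) ≤ -b))
        (Set.mem_Ici.mpr (by linarith : (0:ℝ) ≤ -a)) (by linarith : -b ≤ -a)
      rw [Hd_odd, Hd_odd] at h
      linarith
    · have h1 := m0 (Set.mem_Ici.mpr le_rfl)
        (Set.mem_Ici.mpr (by linarith : (0:ℝ) ≤ -a)) (by linarith : (0:ℝ) ≤ -a)
      have h2 := m0 (Set.mem_Ici.mpr le_rfl) (Set.mem_Ici.mpr hb) hb
      rw [Hd_zero, Hd_odd] at h1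
      rw [Hd_zero] at h2
      linarith

lemma Hex_continuous {xi : ℝ} (hxi : 0 < xi) (ph : ℝ) : Continuous (Hex xi ph) :=
  continuous_iff_continuousAt.mpr fun x => (hasDerivAt_Hex hxi ph x).continuousAt

lemma Hex_convex {xi ph : ℝ} (hxi : 0 < xi) (hph : 0 ≤ ph)
    (hcond : ph * (1 - Real.exp (-xi)) ≤ 1) : ConvexOn ℝ Set.univ (Hex xi ph) := by
  apply MonotoneOn.convexOn_of_deriv convex_univ (Hex_continuous hxi ph).continuousOn
  · rw [interior_univ]
    intro x _
    exact (hasDerivAt_Hex hxi ph x).differentiableAt.differentiableWithinAt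
  · rw [interior_univ]
    intro a _ b _ hab
    rw [(hasDerivAt_Hex hxi ph a).deriv, (hasDerivAt_Hex hxi ph b).deriv]
    exact Hd_monotone hxi hph hcond hab

lemma Hex_even (xi ph x : ℝ) : Hex xi ph (-x) = Hex xi ph x := by
  unfold Hex
  rw [show -x - 1 = -(x + 1) by ring, show -x + 1 = -(x - 1) by ring,
    Fx_even, Fx_even, Fx_even]
  ring

lemma Hex_notconvex {xi ph : ℝ} (hxi : 0 < xi) (hph : 0 ≤ ph)
    (hcond : 1 < ph * (1 - Real.exp (-xi))) : ¬ ConvexOn ℝ Set.univ (Hex xi ph) := by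
  have hE : 0 < Real.exp (-xi) := Real.exp_pos _
  have hph1 : 1 < ph := by nlinarith
  obtain ⟨t0, ht0pos, ht0half, hQneg⟩ := Qx_neg_exists hxi hph1 hcond
  have hne : ∀ x : ℝ, x ∈ Ioo (0:ℝ) t0 → (x ≠ 0 ∧ x - 1 ≠ 0 ∧ x + 1 ≠ 0) := by
    intro x hx
    refine ⟨ne_of_gt hx.1, ?_, ?_⟩
    · intro h; have := sub_eq_zero.mp h; have := hx.2; linarith [ht0half]
    · intro h; have := add_eq_zero_iff_eq_neg.mp h; linarith [hx.1]
  have hHdanti : StrictAntiOn (Hd xi ph) (Icc 0 t0) := by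
    apply strictAntiOn_of_deriv_neg (convex_Icc 0 t0) (Hd_continuous xi ph).continuousOn
    rw [interior_Icc]
    intro x hx
    obtain ⟨n0, n1, n2⟩ := hne x hx
    rw [(hasDerivAt_Hd hxi ph n0 n1 n2).deriv]
    exact mul_neg_of_pos_of_neg hxi (hQneg x hx.1 hx.2.le)
  have hHdneg : ∀ x ∈ Ioo (0:ℝ) t0, Hd xi ph x < 0 := by
    intro x hx
    have h := hHdanti (Set.left_mem_Icc.mpr ht0pos.le) ⟨hx.1.le, hx.2.le⟩ hx.1
    rwa [Hd_zero] at h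
  have hHexanti : StrictAntiOn (Hex xi ph) (Icc 0 t0) := by
    apply strictAntiOn_of_deriv_neg (convex_Icc 0 t0) (Hex_continuous hxi ph).continuousOn
    rw [interior_Icc]
    intro x hx
    rw [(hasDerivAt_Hex hxi ph x).deriv]
    exact hHdneg x hx
  have hlt : Hex xi ph t0 < Hex xi ph 0 :=
    hHexanti (Set.left_mem_Icc.mpr ht0pos.le) (Set.right_mem_Icc.mpr ht0pos.le) ht0pos
  intro hconv
  have h2 := hconv.2 (Set.mem_univ (-t0)) (Set.mem_univ t0)
    (by norm_num : (0:ℝ) ≤ 1/2) (by norm_num : (0:ℝ) ≤ 1/2) (by norm_num)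
  have e1 : (1/2 : ℝ) • (-t0) + (1/2 : ℝ) • t0 = 0 := by
    simp only [smul_eq_mul]; ring
  rw [e1] at h2
  rw [Hex_even] at h2
  simp only [smul_eq_mul] at h2
  linarith

lemma Hex_sub_hphi {xi : ℝ} (hxi : 0 < xi) (ph x : ℝ) :
    Hex xi ph x - hphi ph x = Qx xi ph x / xi := by
  rw [hphi_eq]
  unfold Hex Fx Qx
  field_simp
  ring

lemma ge_iff_cond {xi ph : ℝ} (hxi : 0 < xi) (hph : 0 ≤ ph) :
    (∀ x : ℝ, hphi ph x ≤ Hex xi ph x) ↔ ph * (1 - Real.exp (-xi)) ≤ 1 := by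
  constructor
  · intro h
    have h0 := h 0
    have heq := Hex_sub_hphi hxi ph 0
    have hq : 0 ≤ Qx xi ph 0 := by
      have hdiv : 0 ≤ Qx xi ph 0 / xi := by linarith
      by_contra hneg
      push_neg at hneg
      have := div_neg_of_neg_of_pos hneg hxi
      linarith
    unfold Qx at hq
    simp only [abs_zero, zero_sub, abs_neg, abs_one, zero_add, mul_zero, neg_zero,
      Real.exp_zero, mul_one] at hq
    linarith
  · intro hcond x
    have heq := Hex_sub_hphi hxi ph x
    have hq := Qx_nonneg hxi hph hcond x
    have := div_nonneg hq hxi.le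
    linarith

lemma Hex_convex_iff {xi ph : ℝ} (hxi : 0 < xi) (hph : 0 ≤ ph) :
    ConvexOn ℝ Set.univ (Hex xi ph) ↔ ph * (1 - Real.exp (-xi)) ≤ 1 := by
  constructor
  · intro h
    by_contra hlt
    push_neg at hlt
    exact Hex_notconvex hxi hph hlt h
  · exact Hex_convex hxi hph

lemma hphi_convex_iff {ph : ℝ} (hph : 0 ≤ ph) :
    ConvexOn ℝ Set.univ (hphi ph) ↔ ph ≤ 1 := by
  constructor
  · intro hc
    by_contra hlt
    push_neg at hlt
    have h2 := hc.2 (Set.mem_univ (-1 : ℝ)) (Set.mem_univ (1 : ℝ))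
      (by norm_num : (0:ℝ) ≤ 1/2) (by norm_num : (0:ℝ) ≤ 1/2) (by norm_num)
    simp only [smul_eq_mul] at h2
    norm_num [hphi] at h2
    linarith
  · intro hle
    have c1 : ConvexOn ℝ Set.univ (fun x : ℝ => |x|) := by
      exact convexOn_univ_norm (E := ℝ)
    have c2 : ConvexOn ℝ Set.univ (fun x : ℝ => ph + (1 - ph) * |x|) := by
      have := (convexOn_const (c := ph) convex_univ).add
        (c1.smul (show (0:ℝ) ≤ 1 - ph by linarith))
      exact this
    have hsup := c1.sup c2
    have heq : hphi ph = (fun x : ℝ => |x|) ⊔ (fun x : ℝ => ph + (1 - ph) * |x|) := by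
      funext x
      rw [hphi_max ph hph]
      rfl
    rwa [heq]

/-- `h_φ` is convex iff `φ ≤ 1`; `H_φ` is convex iff `H_φ ≥ h_φ` everywhere
iff `φ ≤ 1/(1-e^{-ξ})`; in particular for `1 < φ ≤ 1/(1-e^{-ξ})` the function `H_φ` is
convex although `h_φ` is not. -/
theorem statement8 (lam ph : ℝ) (hlam : 0 < lam) (hph : 0 ≤ ph) :
    (ConvexOn ℝ Set.univ (hphi ph) ↔ ph ≤ 1) ∧
    (ConvexOn ℝ Set.univ (Hphi (Real.sqrt (2 * lam)) ph) ↔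
      ∀ x : ℝ, hphi ph x ≤ Hphi (Real.sqrt (2 * lam)) ph x) ∧
    (ConvexOn ℝ Set.univ (Hphi (Real.sqrt (2 * lam)) ph) ↔
      ph ≤ 1 / (1 - Real.exp (-Real.sqrt (2 * lam)))) ∧
    (1 < ph → ph ≤ 1 / (1 - Real.exp (-Real.sqrt (2 * lam))) →
      ConvexOn ℝ Set.univ (Hphi (Real.sqrt (2 * lam)) ph) ∧
        ¬ ConvexOn ℝ Set.univ (hphi ph)) := by
  set xi : ℝ := Real.sqrt (2 * lam) with hxidef
  have hxi : 0 < xi := Real.sqrt_pos.mpr (by linarith)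
  have hE : Real.exp (-xi) < 1 := by
    rw [Real.exp_lt_one_iff]
    linarith
  have hden : 0 < 1 - Real.exp (-xi) := by linarith
  have condiff : ph ≤ 1 / (1 - Real.exp (-xi)) ↔ ph * (1 - Real.exp (-xi)) ≤ 1 :=
    le_div_iff₀ hden
  have hH : Hphi xi ph = Hex xi ph := Hphi_eq_Hex hxi ph
  rw [hH]
  refine ⟨hphi_convex_iff hph, ?_, ?_, ?_⟩
  · rw [Hex_convex_iff hxi hph, ge_iff_cond hxi hph]
  · rw [Hex_convex_iff hxi hph, condiff]
  · intro hph1 hcond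
    rw [condiff] at hcond
    refine ⟨Hex_convex hxi hph hcond, ?_⟩
    rw [hphi_convex_iff hph]
    linarith


end PoissonOS
end
end

section
/- Let $B$ be a standard one-dimensional Brownian motion, $a>0$, $b\in\mathbb{R}$, $X^x_t=x+aB_t+bt$, and $\beta,\lambda>0$. Let $(E_k)_{k\ge1}$ be i.i.d. rate-$\lambda$ exponential random variables independent of $B$, let $T_n=E_1+\cdots+E_n$, and let $(\mathcal F_t)$ be the augmented filtration generated by $B$ and $N_t=\#\{n:T_n\le t\}$. Let $g:\mathbb{R}\to[0,\infty)$ be convex with $\mathbb{E}[\sup_{s\ge0}e^{-\beta s}g(X^x_s)]<\infty$ for every $x$. Then $G_\lambda(x)=\mathbb{E}[e^{-\beta T_1}g(X^x_{T_1})]$ is convex in $x$, and $V_\lambda(x)=\sup_\tau\mathbb{E}[e^{-\beta\tau}g(X^x_\tau)\mathbf{1}_{\{\tau<\infty\}}]$ (supremum over $(\mathcal F_t)$-stopping times $\tau$ with $\tau\in\{T_n:n\ge1\}\cup\{\infty\}$ almost surely) is convex in $x$. -/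
open MeasureTheory ProbabilityTheory Real Set Filter
open scoped ENNReal NNReal

noncomputable section

namespace PoissonOS

/-- `B` is a standard one-dimensional Brownian motion started at `x` under `P`:
a measurable process with a.s. continuous paths and independent Gaussian increments. -/
structure IsBM {Om : Type*} [MeasurableSpace Om] (P : Measure Om) (B : ℝ → Om → ℝ)
    (x : ℝ) : Prop where
  isProb : IsProbabilityMeasure P
  meas : ∀ t : ℝ, Measurable (B t)
  init : ∀ᵐ ω ∂P, B 0 ω = x
  cont : ∀ᵐ ω ∂P, Continuous fun t : ℝ => B t ω
  gauss : ∀ s t : ℝ, 0 ≤ s → s ≤ t →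
    P.map (fun ω => B t ω - B s ω) = gaussianReal 0 (Real.toNNReal (t - s))
  indepIncr : ∀ (n : ℕ) (t : Fin (n + 1) → ℝ), (∀ i, 0 ≤ t i) → Monotone t →
    iIndepFun
      (fun i : Fin n => fun ω => B (t i.succ) ω - B (t i.castSucc) ω) P

/-- The σ-algebra generated by the whole path of `B`. -/
def pathSigma {Om : Type*} [MeasurableSpace Om] (B : ℝ → Om → ℝ) : MeasurableSpace Om :=
  ⨆ t : ℝ, MeasurableSpace.comap (B t) inferInstance

/-- `T` is an exponential random variable of rate `r`, independent of the process `B`. -/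
structure IsExpIndep {Om : Type*} [MeasurableSpace Om] (P : Measure Om) (T : Om → ℝ)
    (r : ℝ) (B : ℝ → Om → ℝ) : Prop where
  meas : Measurable T
  law : ∀ t : ℝ, 0 ≤ t → P {ω | t < T ω} = ENNReal.ofReal (Real.exp (-(r * t)))
  indep : Indep (MeasurableSpace.comap T inferInstance) (pathSigma B) P

/-- `E` is an i.i.d. sequence of rate-`r` exponential random variables, independent of `B`. -/
structure IsExpSeq {Om : Type*} [MeasurableSpace Om] (P : Measure Om) (E : ℕ → Om → ℝ)
    (r : ℝ) (B : ℝ → Om → ℝ) : Prop where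
  meas : ∀ n, Measurable (E n)
  law : ∀ n, ∀ t : ℝ, 0 ≤ t → P {ω | t < E n ω} = ENNReal.ofReal (Real.exp (-(r * t)))
  iid : iIndepFun E P
  indep : Indep (⨆ n : ℕ, MeasurableSpace.comap (E n) inferInstance) (pathSigma B) P

/-- Cumulative hazard `∫_0^t θ(B_u) du`, valued in `[0,∞]`. -/
def haz {Om : Type*} (th : ℝ → ℝ) (B : ℝ → Om → ℝ) (t : ℝ) (ω : Om) : ℝ≥0∞ :=
  ∫⁻ u in Set.Ioc (0 : ℝ) t, ENNReal.ofReal (th (B u ω))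

/-- `E_1 + ⋯ + E_n` (the sum of the first `n` entries of the sequence `E`). -/
def expSum {Om : Type*} (E : ℕ → Om → ℝ) (n : ℕ) (ω : Om) : ℝ :=
  ∑ k ∈ Finset.range n, E k ω

/-- The `n`-th event time `T^θ_n = inf {t ≥ 0 : ∫_0^t θ(B_u) du ≥ E_1 + ⋯ + E_n}`
of the Poisson process with state-dependent rate `θ(B_t)` (`= ∞` if there is no such `t`). -/
def eventTime {Om : Type*} (th : ℝ → ℝ) (B : ℝ → Om → ℝ) (E : ℕ → Om → ℝ) (n : ℕ)
    (ω : Om) : ℝ≥0∞ :=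
  ⨅ (t : ℝ) (_ : 0 ≤ t) (_ : ENNReal.ofReal (expSum E n ω) ≤ haz th B t ω),
    ENNReal.ofReal t

/-- Discounted payoff `e^{-βτ} g(B_τ) 1_{τ<∞}`, valued in `[0,∞]`. -/
def payoff {Om : Type*} (β : ℝ) (g : ℝ → ℝ) (B : ℝ → Om → ℝ) (τ : Om → ℝ≥0∞)
    (ω : Om) : ℝ≥0∞ :=
  {ω' | τ ω' < ⊤}.indicator
    (fun ω' => ENNReal.ofReal (Real.exp (-β * (τ ω').toReal) * g (B (τ ω').toReal ω'))) ω

/-- `E[e^{-βτ} g(B_τ) 1_{τ<∞}]`, valued in `[0,∞]`. -/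
def stopVal {Om : Type*} [MeasurableSpace Om] (P : Measure Om) (β : ℝ) (g : ℝ → ℝ)
    (B : ℝ → Om → ℝ) (τ : Om → ℝ≥0∞) : ℝ≥0∞ :=
  ∫⁻ ω, payoff β g B τ ω ∂P

/-- `E[sup_{s ≥ t} e^{-βs} g(B_s)]`, valued in `[0,∞]`. -/
def tailSup {Om : Type*} [MeasurableSpace Om] (P : Measure Om) (β : ℝ) (g : ℝ → ℝ)
    (B : ℝ → Om → ℝ) (t : ℝ) : ℝ≥0∞ :=
  ∫⁻ ω, ⨆ (s : ℝ) (_ : t ≤ s), ENNReal.ofReal (Real.exp (-β * s) * g (B s ω)) ∂P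

/-- The σ-algebra generated by the `P`-null sets. -/
def nullSets {Om : Type*} [MeasurableSpace Om] (P : Measure Om) : MeasurableSpace Om :=
  MeasurableSpace.generateFrom {A : Set Om | P A = 0}

/-- The augmented filtration generated by the process `B` and the counting process
of the event times `(T_n)`. -/
def filt {Om : Type*} [MeasurableSpace Om] (P : Measure Om) (B : ℝ → Om → ℝ)
    (T : ℕ → Om → ℝ≥0∞) (t : ℝ) : MeasurableSpace Om :=
  (⨆ s : {s : ℝ // s ≤ t}, MeasurableSpace.comap (B s.1) inferInstance) ⊔
    (⨆ s : {s : ℝ // s ≤ t}, ⨆ n : ℕ,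
      MeasurableSpace.generateFrom {A : Set Om | A = {ω | T n ω ≤ ENNReal.ofReal s.1}}) ⊔
    nullSets P

/-- `τ` is a stopping time of the filtration `F` (as a `[0,∞]`-valued random time). -/
def IsStopTime {Om : Type*} (F : ℝ → MeasurableSpace Om) (τ : Om → ℝ≥0∞) : Prop :=
  ∀ t : ℝ, MeasurableSet[F t] {ω | τ ω ≤ ENNReal.ofReal t}

/-- `τ ∈ {T_n : n ≥ 1} ∪ {∞}` almost surely. -/
def ValuesIn {Om : Type*} [MeasurableSpace Om] (P : Measure Om) (T : ℕ → Om → ℝ≥0∞)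
    (τ : Om → ℝ≥0∞) : Prop :=
  ∀ᵐ ω ∂P, τ ω = ⊤ ∨ ∃ n : ℕ, 1 ≤ n ∧ τ ω = T n ω

/-- Value of the Poisson optimal stopping problem: the supremum of
`E[e^{-βτ} g(Bpay_τ) 1_{τ<∞}]` over stopping times `τ` of the augmented filtration
generated by `Bfilt` and the counting process of `(T_n)`, with `τ ∈ {T_n : n ≥ 1} ∪ {∞}` a.s. -/
def Vval {Om : Type*} [MeasurableSpace Om] (P : Measure Om) (β : ℝ) (g : ℝ → ℝ)
    (Bpay Bfilt : ℝ → Om → ℝ) (T : ℕ → Om → ℝ≥0∞) : ℝ≥0∞ :=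
  ⨆ (τ : Om → ℝ≥0∞) (_ : IsStopTime (filt P Bfilt T) τ) (_ : ValuesIn P T τ),
    stopVal P β g Bpay τ

section Aux

variable {Om : Type*} [MeasurableSpace Om] {P : Measure Om}

/-- A process evaluated at a measurable a.e.-nonnegative random time is a.e.-measurable,
provided the process is measurable at each time and has a.s. continuous paths. -/
lemma aemeasurable_time_comp {W : ℝ → Om → ℝ} {u : Om → ℝ}
    (hWm : ∀ t : ℝ, Measurable (W t)) (hWc : ∀ᵐ ω ∂P, Continuous fun t : ℝ => W t ω)
    (hu : Measurable u) (hu0 : ∀ᵐ ω ∂P, 0 ≤ u ω) :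
    AEMeasurable (fun ω => W (u ω) ω) P := by
  have hfm : ∀ n : ℕ, Measurable (fun ω => W ((⌈u ω * 2 ^ n⌉₊ : ℝ) / 2 ^ n) ω) := by
    intro n
    have h2 : Measurable fun p : Om × ℕ => W ((p.2 : ℝ) / 2 ^ n) p.1 := by
      apply measurable_from_prod_countable_left
      intro k
      show Measurable fun ω => W ((k : ℝ) / 2 ^ n) ω
      exact hWm _
    exact h2.comp (measurable_id.prodMk ((hu.mul measurable_const).nat_ceil))
  refine aemeasurable_of_tendsto_metrizable_ae' (fun n => (hfm n).aemeasurable) ?_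
  filter_upwards [hWc, hu0] with ω hc h0
  have hq : Filter.Tendsto (fun n : ℕ => (⌈u ω * 2 ^ n⌉₊ : ℝ) / 2 ^ n) Filter.atTop
      (nhds (u ω)) := by
    have hup : Filter.Tendsto (fun n : ℕ => u ω + (2⁻¹ : ℝ) ^ n) Filter.atTop
        (nhds (u ω)) := by
      have h2 := tendsto_pow_atTop_nhds_zero_of_lt_one
        (by norm_num : (0:ℝ) ≤ 2⁻¹) (by norm_num : (2⁻¹ : ℝ) < 1)
      simpa using tendsto_const_nhds.add h2
    refine tendsto_of_tendsto_of_tendsto_of_le_of_le tendsto_const_nhds hup ?_ ?_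
    · intro n
      have h2n : (0:ℝ) < 2 ^ n := by positivity
      rw [le_div_iff₀ h2n]
      exact Nat.le_ceil _
    · intro n
      have h2n : (0:ℝ) < 2 ^ n := by positivity
      have hce : (⌈u ω * 2 ^ n⌉₊ : ℝ) < u ω * 2 ^ n + 1 :=
        Nat.ceil_lt_add_one (by positivity)
      rw [div_le_iff₀ h2n]
      have hpow : (2⁻¹ : ℝ) ^ n * 2 ^ n = 1 := by
        rw [← mul_pow]; norm_num
      nlinarith
  exact (hc.tendsto (u ω)).comp hq

/-- Transfer an `ℝ≥0∞`-valued convexity inequality to convexity of the `toReal`. -/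
lemma convexOn_toReal_of_le {F : ℝ → ℝ≥0∞} (hfin : ∀ x, F x ≠ ⊤)
    (h : ∀ x y s t : ℝ, 0 ≤ s → 0 ≤ t → s + t = 1 →
      F (s * x + t * y) ≤ ENNReal.ofReal s * F x + ENNReal.ofReal t * F y) :
    ConvexOn ℝ Set.univ fun x => (F x).toReal := by
  refine ⟨convex_univ, fun x _ y _ s t hs ht hst => ?_⟩
  have hle := h x y s t hs ht hst
  have hne : ENNReal.ofReal s * F x + ENNReal.ofReal t * F y ≠ ⊤ := by
    simp [ENNReal.add_eq_top, ENNReal.mul_eq_top, hfin x, hfin y]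
  calc (F (s • x + t • y)).toReal
      ≤ (ENNReal.ofReal s * F x + ENNReal.ofReal t * F y).toReal := by
        refine ENNReal.toReal_mono hne ?_
        simpa [smul_eq_mul] using hle
    _ = s * (F x).toReal + t * (F y).toReal := by
        rw [ENNReal.toReal_add (by simp [ENNReal.mul_eq_top, hfin x])
            (by simp [ENNReal.mul_eq_top, hfin y]),
          ENNReal.toReal_mul, ENNReal.toReal_mul, ENNReal.toReal_ofReal hs,
          ENNReal.toReal_ofReal ht]

/-- Pointwise convexity inequality for the discounted payoff. -/
lemma pointwise_convex {g : ℝ → ℝ} (hg : ConvexOn ℝ Set.univ g) (hg0 : ∀ y : ℝ, 0 ≤ g y)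
    {c : ℝ} (hc : 0 ≤ c) (x y s t w : ℝ) (hs : 0 ≤ s) (ht : 0 ≤ t) (hst : s + t = 1) :
    ENNReal.ofReal (c * g (s * x + t * y + w)) ≤
      ENNReal.ofReal s * ENNReal.ofReal (c * g (x + w)) +
        ENNReal.ofReal t * ENNReal.ofReal (c * g (y + w)) := by
  have harg : s * x + t * y + w = s * (x + w) + t * (y + w) := by
    linear_combination (-w) * hst
  have hgle : g (s * (x + w) + t * (y + w)) ≤ s * g (x + w) + t * g (y + w) := by
    have h2 := hg.2 (Set.mem_univ (x + w)) (Set.mem_univ (y + w)) hs ht hst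
    simpa [smul_eq_mul] using h2
  calc ENNReal.ofReal (c * g (s * x + t * y + w))
      ≤ ENNReal.ofReal (s * (c * g (x + w)) + t * (c * g (y + w))) := by
        apply ENNReal.ofReal_le_ofReal
        rw [harg]
        nlinarith [mul_le_mul_of_nonneg_left hgle hc]
    _ = ENNReal.ofReal (s * (c * g (x + w))) + ENNReal.ofReal (t * (c * g (y + w))) :=
        ENNReal.ofReal_add (mul_nonneg hs (mul_nonneg hc (hg0 _)))
          (mul_nonneg ht (mul_nonneg hc (hg0 _)))
    _ = ENNReal.ofReal s * ENNReal.ofReal (c * g (x + w)) +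
          ENNReal.ofReal t * ENNReal.ofReal (c * g (y + w)) := by
        rw [ENNReal.ofReal_mul hs, ENNReal.ofReal_mul ht]

/-- The completion σ-algebra: null measurable sets. -/
def compSA (P : Measure Om) : MeasurableSpace Om where
  MeasurableSet' s := NullMeasurableSet s P
  measurableSet_empty := MeasurableSet.empty.nullMeasurableSet
  measurableSet_compl _ hs := NullMeasurableSet.compl hs
  measurableSet_iUnion _ hf := NullMeasurableSet.iUnion hf

lemma compSA_eq {s : Set Om} : MeasurableSet[compSA P] s ↔ NullMeasurableSet s P := Iff.rfl

/-- A stopping time of the augmented filtration is a.e.-measurable. -/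
lemma stopTime_aemeasurable {W : ℝ → Om → ℝ} {T : ℕ → Om → ℝ≥0∞}
    (hWm : ∀ t : ℝ, Measurable (W t)) (hTm : ∀ n, Measurable (T n))
    {τ : Om → ℝ≥0∞} (hτ : IsStopTime (filt P W T) τ) : AEMeasurable τ P := by
  classical
  have hamb : (inferInstance : MeasurableSpace Om) ≤ compSA P := by
    intro s hs
    exact compSA_eq.mpr hs.nullMeasurableSet
  have hle : ∀ t : ℝ, filt P W T t ≤ compSA P := by
    intro t
    refine sup_le (sup_le ?_ ?_) ?_
    · exact iSup_le fun s => le_trans ((hWm s.1).comap_le) hamb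
    · refine iSup_le fun s => iSup_le fun n => MeasurableSpace.generateFrom_le ?_
      intro A hA
      rw [show A = {ω | T n ω ≤ ENNReal.ofReal s.1} from hA]
      exact hamb _ (measurableSet_le (hTm n) measurable_const)
    · refine MeasurableSpace.generateFrom_le ?_
      intro A hA
      exact compSA_eq.mpr (MeasurableSet.empty.nullMeasurableSet.congr (ae_eq_empty.2 hA).symm)
  have key : ∀ q : ℝ, NullMeasurableSet {ω | τ ω ≤ ENNReal.ofReal q} P :=
    fun q => compSA_eq.mp (hle q _ (hτ q))
  have hml : Measurable[compSA P] τ := by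
    refine measurable_of_Iic ?_
    intro a
    rcases eq_or_ne a ⊤ with rfl | ha
    · have : τ ⁻¹' Set.Iic (⊤ : ℝ≥0∞) = Set.univ := by
        ext ω; simp
      rw [this]
      exact compSA_eq.mpr MeasurableSet.univ.nullMeasurableSet
    · have hset : τ ⁻¹' Set.Iic a =
          ⋂ (q : ℚ), ⋂ (_ : a < ENNReal.ofReal (q : ℝ)),
            {ω | τ ω ≤ ENNReal.ofReal (q : ℝ)} := by
        ext ω
        simp only [Set.mem_preimage, Set.mem_Iic, Set.mem_iInter, Set.mem_setOf_eq]
        constructor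
        · exact fun h q hq => le_trans h hq.le
        · intro h
          by_contra hlt
          push_neg at hlt
          obtain ⟨q, _, haq, hqτ⟩ := ENNReal.lt_iff_exists_rat_btwn.mp hlt
          have hco : ENNReal.ofReal (q : ℝ) = ((Real.toNNReal (q : ℝ) : ℝ≥0) : ℝ≥0∞) := rfl
          have h1 : τ ω ≤ ENNReal.ofReal (q : ℝ) := h q (by rw [hco]; exact haq)
          rw [hco] at h1
          exact absurd hqτ (not_lt.2 h1)
      rw [hset]
      exact compSA_eq.mpr (NullMeasurableSet.iInter fun q => NullMeasurableSet.iInter fun _ => key _)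
  have hnm : NullMeasurable τ P := fun s hs => compSA_eq.mp (hml hs)
  exact hnm.aemeasurable

end Aux

/-- for Brownian motion with drift `X^x_t = x + aB_t + bt` and convex `g`,
both `G_λ(x) = E[e^{-β T_1} g(X^x_{T_1})]` and the Poisson stopping value `V_λ(x)` are
convex in `x`. -/
theorem statement11 {Om : Type*} [MeasurableSpace Om] (P : Measure Om) (W : ℝ → Om → ℝ)
    (a b β lam : ℝ) (E : ℕ → Om → ℝ) (g : ℝ → ℝ)
    (ha : 0 < a) (hβ : 0 < β) (hlam : 0 < lam)
    (hW : IsBM P W 0) (hE : IsExpSeq P E lam W)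
    (hg : ConvexOn ℝ Set.univ g) (hg0 : ∀ y : ℝ, 0 ≤ g y)
    (hsup : ∀ x : ℝ, tailSup P β g (fun t ω => x + a * W t ω + b * t) 0 < ⊤) :
    ConvexOn ℝ Set.univ (fun x =>
      (∫⁻ ω, ENNReal.ofReal
        (Real.exp (-β * expSum E 1 ω) *
          g (x + a * W (expSum E 1 ω) ω + b * expSum E 1 ω)) ∂P).toReal) ∧
    ConvexOn ℝ Set.univ (fun x =>
      (Vval P β g (fun t ω => x + a * W t ω + b * t) W
        (fun n ω => ENNReal.ofReal (expSum E n ω))).toReal) := by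
  classical
  haveI := hW.isProb
  have hgc : Continuous g := continuousOn_univ.mp (hg.continuousOn isOpen_univ)
  set T : ℕ → Om → ℝ≥0∞ := fun n ω => ENNReal.ofReal (expSum E n ω) with hT
  have hTm : ∀ n, Measurable (T n) := fun n =>
    ENNReal.measurable_ofReal.comp (Finset.measurable_sum _ fun k _ => hE.meas k)
  have hum : Measurable (expSum E 1) := Finset.measurable_sum _ fun k _ => hE.meas k
  have h1 : P {ω | 0 < E 0 ω} = 1 := by simpa using hE.law 0 0 le_rfl
  have hms : MeasurableSet {ω | 0 < E 0 ω} := measurableSet_lt measurable_const (hE.meas 0)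
  have hnull : P {ω | 0 < E 0 ω}ᶜ = 0 := by
    rw [measure_compl hms (measure_ne_top P _), h1, measure_univ, tsub_self]
  have hu0 : ∀ᵐ ω ∂P, 0 ≤ expSum E 1 ω := by
    rw [ae_iff]
    refine measure_mono_null ?_ hnull
    intro ω hω
    simp only [Set.mem_setOf_eq, not_le, expSum, Finset.sum_range_one] at hω
    simp only [Set.mem_compl_iff, Set.mem_setOf_eq, not_lt]
    exact hω.le
  have hWA : AEMeasurable (fun ω => W (expSum E 1 ω) ω) P :=
    aemeasurable_time_comp hW.meas hW.cont hum hu0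
  have hf1 : ∀ x : ℝ, AEMeasurable (fun ω => ENNReal.ofReal
      (Real.exp (-β * expSum E 1 ω) *
        g (x + a * W (expSum E 1 ω) ω + b * expSum E 1 ω))) P := by
    intro x
    apply ENNReal.measurable_ofReal.comp_aemeasurable
    apply AEMeasurable.mul
    · exact (Real.measurable_exp.comp (hum.const_mul (-β))).aemeasurable
    · exact hgc.measurable.comp_aemeasurable
        ((aemeasurable_const.add (hWA.const_mul a)).add (hum.aemeasurable.const_mul b))
  have hfin1 : ∀ x : ℝ, (∫⁻ ω, ENNReal.ofReal (Real.exp (-β * expSum E 1 ω) *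
      g (x + a * W (expSum E 1 ω) ω + b * expSum E 1 ω)) ∂P) ≠ ⊤ := by
    intro x
    refine ne_of_lt (lt_of_le_of_lt ?_ (hsup x))
    rw [tailSup]
    refine lintegral_mono_ae ?_
    filter_upwards [hu0] with ω h0
    exact le_iSup₂ (f := fun (s : ℝ) (_ : (0:ℝ) ≤ s) =>
      ENNReal.ofReal (Real.exp (-β * s) * g (x + a * W s ω + b * s))) (expSum E 1 ω) h0
  have hcvx1 : ∀ x y s t : ℝ, 0 ≤ s → 0 ≤ t → s + t = 1 →
      (∫⁻ ω, ENNReal.ofReal (Real.exp (-β * expSum E 1 ω) *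
        g (s * x + t * y + a * W (expSum E 1 ω) ω + b * expSum E 1 ω)) ∂P) ≤
      ENNReal.ofReal s * (∫⁻ ω, ENNReal.ofReal (Real.exp (-β * expSum E 1 ω) *
        g (x + a * W (expSum E 1 ω) ω + b * expSum E 1 ω)) ∂P) +
      ENNReal.ofReal t * (∫⁻ ω, ENNReal.ofReal (Real.exp (-β * expSum E 1 ω) *
        g (y + a * W (expSum E 1 ω) ω + b * expSum E 1 ω)) ∂P) := by
    intro x y s t hs ht hst
    have hpt : ∀ ω, ENNReal.ofReal (Real.exp (-β * expSum E 1 ω) *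
        g (s * x + t * y + a * W (expSum E 1 ω) ω + b * expSum E 1 ω)) ≤
        ENNReal.ofReal s * ENNReal.ofReal (Real.exp (-β * expSum E 1 ω) *
          g (x + a * W (expSum E 1 ω) ω + b * expSum E 1 ω)) +
        ENNReal.ofReal t * ENNReal.ofReal (Real.exp (-β * expSum E 1 ω) *
          g (y + a * W (expSum E 1 ω) ω + b * expSum E 1 ω)) := by
      intro ω
      have hpc := pointwise_convex hg hg0 (Real.exp_nonneg (-β * expSum E 1 ω)) x y s t
        (a * W (expSum E 1 ω) ω + b * expSum E 1 ω) hs ht hst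
      simpa [← add_assoc] using hpc
    calc (∫⁻ ω, ENNReal.ofReal (Real.exp (-β * expSum E 1 ω) *
          g (s * x + t * y + a * W (expSum E 1 ω) ω + b * expSum E 1 ω)) ∂P)
        ≤ ∫⁻ ω, (ENNReal.ofReal s * ENNReal.ofReal (Real.exp (-β * expSum E 1 ω) *
            g (x + a * W (expSum E 1 ω) ω + b * expSum E 1 ω)) +
          ENNReal.ofReal t * ENNReal.ofReal (Real.exp (-β * expSum E 1 ω) *
            g (y + a * W (expSum E 1 ω) ω + b * expSum E 1 ω))) ∂P := lintegral_mono hpt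
      _ = _ := by
          rw [lintegral_add_left' ((hf1 x).const_mul _),
            lintegral_const_mul' _ _ ENNReal.ofReal_ne_top,
            lintegral_const_mul' _ _ ENNReal.ofReal_ne_top]
  have hpayle : ∀ (x : ℝ) (τ : Om → ℝ≥0∞) (ω : Om),
      payoff β g (fun t ω => x + a * W t ω + b * t) τ ω ≤
        ⨆ (s : ℝ) (_ : (0:ℝ) ≤ s),
          ENNReal.ofReal (Real.exp (-β * s) * g (x + a * W s ω + b * s)) := by
    intro x τ ω
    rw [payoff]
    by_cases h : τ ω < ⊤
    · rw [Set.indicator_of_mem (show ω ∈ {ω' | τ ω' < ⊤} from h)]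
      exact le_iSup₂ (f := fun (s : ℝ) (_ : (0:ℝ) ≤ s) =>
        ENNReal.ofReal (Real.exp (-β * s) * g (x + a * W s ω + b * s)))
        ((τ ω).toReal) ENNReal.toReal_nonneg
    · rw [Set.indicator_of_notMem (show ω ∉ {ω' | τ ω' < ⊤} from h)]
      exact zero_le
  have hfin2 : ∀ x : ℝ, Vval P β g (fun t ω => x + a * W t ω + b * t) W T ≠ ⊤ := by
    intro x
    refine ne_of_lt (lt_of_le_of_lt ?_ (hsup x))
    unfold Vval
    refine iSup_le fun τ => iSup_le fun _ => iSup_le fun _ => ?_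
    rw [stopVal, tailSup]
    exact lintegral_mono fun ω => hpayle x τ ω
  have hcvx2 : ∀ x y s t : ℝ, 0 ≤ s → 0 ≤ t → s + t = 1 →
      Vval P β g (fun t' ω => s * x + t * y + a * W t' ω + b * t') W T ≤
        ENNReal.ofReal s * Vval P β g (fun t' ω => x + a * W t' ω + b * t') W T +
        ENNReal.ofReal t * Vval P β g (fun t' ω => y + a * W t' ω + b * t') W T := by
    intro x y s t hs ht hst
    conv_lhs => rw [Vval]
    refine iSup_le fun τ => iSup_le fun hstp => iSup_le fun hval => ?_
    have hmτ := stopTime_aemeasurable hW.meas hTm hstp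
    set τ' := hmτ.mk τ with hτ'
    have hτ'm : Measurable τ' := hmτ.measurable_mk
    have heq : τ =ᵐ[P] τ' := hmτ.ae_eq_mk
    have hpeq : ∀ z : ℝ,
        (fun ω => payoff β g (fun t' ω => z + a * W t' ω + b * t') τ ω) =ᵐ[P]
        (fun ω => payoff β g (fun t' ω => z + a * W t' ω + b * t') τ' ω) := by
      intro z
      filter_upwards [heq] with ω hω
      simp only [payoff, Set.indicator_apply, Set.mem_setOf_eq, hω]
    have hstopeq : ∀ z : ℝ, stopVal P β g (fun t' ω => z + a * W t' ω + b * t') τ =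
        stopVal P β g (fun t' ω => z + a * W t' ω + b * t') τ' := fun z =>
      lintegral_congr_ae (hpeq z)
    have hu' : Measurable fun ω => (τ' ω).toReal := hτ'm.ennreal_toReal
    have hWA' : AEMeasurable (fun ω => W ((τ' ω).toReal) ω) P :=
      aemeasurable_time_comp hW.meas hW.cont hu'
        (Filter.Eventually.of_forall fun ω => ENNReal.toReal_nonneg)
    have hsm : MeasurableSet {ω | τ' ω < ⊤} := by
      have hids : {ω | τ' ω < ⊤} = τ' ⁻¹' (Set.Iio ⊤) := rfl
      rw [hids]
      exact hτ'm measurableSet_Iio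
    have hpm : ∀ z : ℝ, AEMeasurable
        (fun ω => payoff β g (fun t' ω => z + a * W t' ω + b * t') τ' ω) P := by
      intro z
      simp only [payoff]
      refine AEMeasurable.indicator ?_ hsm
      apply ENNReal.measurable_ofReal.comp_aemeasurable
      apply AEMeasurable.mul
      · exact (Real.measurable_exp.comp (hu'.const_mul (-β))).aemeasurable
      · exact hgc.measurable.comp_aemeasurable
          ((aemeasurable_const.add (hWA'.const_mul a)).add (hu'.aemeasurable.const_mul b))
    have hpt : ∀ ω, payoff β g (fun t' ω => s * x + t * y + a * W t' ω + b * t') τ' ω ≤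
        ENNReal.ofReal s * payoff β g (fun t' ω => x + a * W t' ω + b * t') τ' ω +
        ENNReal.ofReal t * payoff β g (fun t' ω => y + a * W t' ω + b * t') τ' ω := by
      intro ω
      simp only [payoff, Set.indicator_apply, Set.mem_setOf_eq]
      by_cases h : τ' ω < ⊤
      · simp only [h, if_true]
        have hpc := pointwise_convex hg hg0 (Real.exp_nonneg (-β * (τ' ω).toReal)) x y s t
          (a * W ((τ' ω).toReal) ω + b * (τ' ω).toReal) hs ht hst
        simpa [← add_assoc] using hpc
      · simp [h]
    have hVle : ∀ z : ℝ, stopVal P β g (fun t' ω => z + a * W t' ω + b * t') τ ≤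
        Vval P β g (fun t' ω => z + a * W t' ω + b * t') W T := by
      intro z
      unfold Vval
      exact le_iSup_of_le τ (le_iSup_of_le hstp (le_iSup_of_le hval le_rfl))
    calc stopVal P β g (fun t' ω => s * x + t * y + a * W t' ω + b * t') τ
        = stopVal P β g (fun t' ω => s * x + t * y + a * W t' ω + b * t') τ' := hstopeq _
      _ ≤ ∫⁻ ω, (ENNReal.ofReal s * payoff β g (fun t' ω => x + a * W t' ω + b * t') τ' ω +
            ENNReal.ofReal t * payoff β g (fun t' ω => y + a * W t' ω + b * t') τ' ω) ∂P :=
          lintegral_mono hpt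
      _ = ENNReal.ofReal s * stopVal P β g (fun t' ω => x + a * W t' ω + b * t') τ' +
            ENNReal.ofReal t * stopVal P β g (fun t' ω => y + a * W t' ω + b * t') τ' := by
          rw [lintegral_add_left' ((hpm x).const_mul _),
            lintegral_const_mul' _ _ ENNReal.ofReal_ne_top,
            lintegral_const_mul' _ _ ENNReal.ofReal_ne_top]
          rfl
      _ = ENNReal.ofReal s * stopVal P β g (fun t' ω => x + a * W t' ω + b * t') τ +
            ENNReal.ofReal t * stopVal P β g (fun t' ω => y + a * W t' ω + b * t') τ := by
          rw [hstopeq x, hstopeq y]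
      _ ≤ _ :=
          add_le_add (mul_le_mul_right (hVle x) _) (mul_le_mul_right (hVle y) _)
  exact ⟨convexOn_toReal_of_le hfin1 hcvx1, convexOn_toReal_of_le hfin2 hcvx2⟩


end PoissonOS
end
end

section
/- Assume $\mathbb{E}^x\big[\sup_{s\ge0}e^{-\beta s}g(B_s)\big]<\infty$ and $\lim_{t\to\infty}\mathbb{E}^x\big[\sup_{s\ge t}e^{-\beta s}g(B_s)\big]=0$ for every $x$. Then $V_\theta(x)=\lim_{n\to\infty}V^{(n)}_\theta(x)$ for every $x$, where $V^{(n)}_\theta(x)$ is the supremum of $\mathbb{E}^x[e^{-\beta\tau}g(B_\tau)\mathbf{1}_{\{\tau<\infty\}}]$ over $(\mathcal F_t)$-stopping times $\tau$ with $\tau\in\{T^\theta_1,\dots,T^\theta_n\}\cup\{\infty\}$ almost surely, and $V_\theta(x)$ is the supremum over $(\mathcal F_t)$-stopping times $\tau$ with $\tau\in\{T^\theta_n:n\ge1\}\cup\{\infty\}$ almost surely. -/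
open MeasureTheory ProbabilityTheory Real Set Filter
open scoped ENNReal NNReal

noncomputable section

namespace PoissonOS

/-- `τ ∈ {T_1, …, T_n} ∪ {∞}` almost surely. -/
def ValuesInLe {Om : Type*} [MeasurableSpace Om] (P : Measure Om) (T : ℕ → Om → ℝ≥0∞)
    (n : ℕ) (τ : Om → ℝ≥0∞) : Prop :=
  ∀ᵐ ω ∂P, τ ω = ⊤ ∨ ∃ k : ℕ, 1 ≤ k ∧ k ≤ n ∧ τ ω = T k ω

/-- Value of the Poisson optimal stopping problem restricted to the first `n` event times. -/
def VvalN {Om : Type*} [MeasurableSpace Om] (P : Measure Om) (β : ℝ) (g : ℝ → ℝ)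
    (Bpay Bfilt : ℝ → Om → ℝ) (T : ℕ → Om → ℝ≥0∞) (n : ℕ) : ℝ≥0∞ :=
  ⨆ (τ : Om → ℝ≥0∞) (_ : IsStopTime (filt P Bfilt T) τ) (_ : ValuesInLe P T n τ),
    stopVal P β g Bpay τ


/-! ### Auxiliary constructions for measurability -/

section Aux

variable {Om : Type*}

/-- Dyadic-time approximation of the process. -/
private def dyad (W : ℝ → Om → ℝ) (n : ℕ) (p : Om × ℝ) : ℝ :=
  W ((⌈p.2 * 2 ^ n⌉ : ℝ) / 2 ^ n) p.1

private lemma measurable_dyad [MeasurableSpace Om] (W : ℝ → Om → ℝ)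
    (hW : ∀ t, Measurable (W t)) (n : ℕ) : Measurable (dyad W n) := by
  have h1 : Measurable fun q : Om × ℤ => W ((q.2 : ℝ) / 2 ^ n) q.1 :=
    measurable_from_prod_countable_left fun k : ℤ => hW ((k : ℝ) / 2 ^ n)
  have h2 : Measurable fun p : Om × ℝ => (p.1, (⌈p.2 * 2 ^ n⌉ : ℤ)) :=
    measurable_fst.prodMk (Int.measurable_ceil.comp (measurable_snd.mul_const _))
  exact h1.comp h2

/-- A jointly measurable version of the process (agreeing with `W` on continuity paths). -/
private def wlim (W : ℝ → Om → ℝ) (p : Om × ℝ) : ℝ :=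
  (Filter.limsup (fun n : ℕ => ((dyad W n p : ℝ) : EReal)) Filter.atTop).toReal

private lemma measurable_wlim [MeasurableSpace Om] (W : ℝ → Om → ℝ)
    (hW : ∀ t, Measurable (W t)) : Measurable (wlim W) :=
  Measurable.ereal_toReal
    (Measurable.limsup fun n => (measurable_dyad W hW n).coe_real_ereal)

private lemma wlim_eq {W : ℝ → Om → ℝ} {ω : Om}
    (hω : Continuous fun t : ℝ => W t ω) (t : ℝ) : wlim W (ω, t) = W t ω := by
  have hd : Tendsto (fun n : ℕ => (⌈t * 2 ^ n⌉ : ℝ) / 2 ^ n) atTop (nhds t) := by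
    have h1 : ∀ n : ℕ, t ≤ (⌈t * 2 ^ n⌉ : ℝ) / 2 ^ n := by
      intro n
      rw [le_div_iff₀ (by positivity)]
      exact Int.le_ceil _
    have h2 : ∀ n : ℕ, (⌈t * 2 ^ n⌉ : ℝ) / 2 ^ n ≤ t + (1 / 2) ^ n := by
      intro n
      rw [div_le_iff₀ (by positivity)]
      have h3 : ((1 : ℝ) / 2) ^ n * 2 ^ n = 1 := by
        rw [← mul_pow]
        norm_num
      calc (⌈t * 2 ^ n⌉ : ℝ) ≤ t * 2 ^ n + 1 := le_of_lt (Int.ceil_lt_add_one _)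
        _ = (t + (1 / 2) ^ n) * 2 ^ n := by rw [add_mul, h3]
    have hup : Tendsto (fun n : ℕ => t + ((1 : ℝ) / 2) ^ n) atTop (nhds t) := by
      have := (tendsto_const_nhds : Tendsto (fun _ : ℕ => t) atTop (nhds t)).add
        (tendsto_pow_atTop_nhds_zero_of_lt_one (by norm_num) (by norm_num : (1:ℝ)/2 < 1))
      simpa using this
    exact tendsto_of_tendsto_of_tendsto_of_le_of_le tendsto_const_nhds hup h1 h2
  have hWd : Tendsto (fun n : ℕ => dyad W n (ω, t)) atTop (nhds (W t ω)) := by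
    have := (hω.tendsto t).comp hd
    simpa [dyad, Function.comp_def] using this
  have hEr : Tendsto (fun n : ℕ => ((dyad W n (ω, t) : ℝ) : EReal)) atTop
      (nhds ((W t ω : ℝ) : EReal)) := (continuous_coe_real_ereal.tendsto _).comp hWd
  rw [wlim, hEr.limsup_eq, EReal.toReal_coe]

/-- Infimum over nonnegative reals of a monotone constraint can be computed over rationals. -/
private lemma iInf_time_rat {Hf : ℝ → ℝ≥0∞} (hmono : Monotone Hf) (c : ℝ≥0∞) :
    (⨅ (t : ℝ) (_ : 0 ≤ t) (_ : c ≤ Hf t), ENNReal.ofReal t) =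
      ⨅ (q : ℚ) (_ : 0 ≤ (q : ℝ)) (_ : c ≤ Hf (q : ℝ)), ENNReal.ofReal (q : ℝ) := by
  apply le_antisymm
  · exact le_iInf fun q => le_iInf fun hq => le_iInf fun hc =>
      iInf_le_of_le (q : ℝ) (iInf_le_of_le hq (iInf_le _ hc))
  · refine le_iInf fun t => le_iInf fun ht => le_iInf fun hct => ?_
    refine ENNReal.le_of_forall_pos_le_add fun ε hε _ => ?_
    have hε' : (0 : ℝ) < (ε : ℝ) := by exact_mod_cast hε
    obtain ⟨q, hq1, hq2⟩ := exists_rat_btwn (lt_add_of_pos_right t hε')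
    calc (⨅ (q : ℚ) (_ : 0 ≤ (q : ℝ)) (_ : c ≤ Hf (q : ℝ)), ENNReal.ofReal (q : ℝ))
        ≤ ENNReal.ofReal (q : ℝ) :=
          iInf_le_of_le q (iInf_le_of_le (ht.trans hq1.le)
            (iInf_le _ (hct.trans (hmono hq1.le))))
      _ ≤ ENNReal.ofReal (t + ε) := ENNReal.ofReal_le_ofReal hq2.le
      _ = ENNReal.ofReal t + ENNReal.ofReal (ε : ℝ) :=
          ENNReal.ofReal_add ht (by positivity)
      _ = ENNReal.ofReal t + (ε : ℝ≥0∞) := by rw [ENNReal.ofReal_coe_nnreal]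

/-- In `ℝ≥0∞`, strict inequality can be witnessed by a rational threshold. -/
private lemma lt_iff_exists_rat (a b : ℝ≥0∞) :
    b < a ↔ ∃ q : ℚ, b ≤ ENNReal.ofReal (q : ℝ) ∧ ¬ a ≤ ENNReal.ofReal (q : ℝ) := by
  constructor
  · intro h
    have hb : b ≠ ⊤ := h.ne_top
    rcases eq_or_ne a ⊤ with ha | ha
    · obtain ⟨q, hq⟩ := exists_rat_gt b.toReal
      refine ⟨q, ?_, ?_⟩
      · rw [← ENNReal.ofReal_toReal hb]
        exact ENNReal.ofReal_le_ofReal hq.le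
      · rw [ha, top_le_iff]
        exact ENNReal.ofReal_ne_top
    · have hba : b.toReal < a.toReal := by
        rw [ENNReal.toReal_lt_toReal hb ha]
        exact h
      obtain ⟨q, hq1, hq2⟩ := exists_rat_btwn hba
      refine ⟨q, ?_, ?_⟩
      · rw [← ENNReal.ofReal_toReal hb]
        exact ENNReal.ofReal_le_ofReal hq1.le
      · rw [not_le, ← ENNReal.ofReal_toReal ha]
        rw [ENNReal.ofReal_lt_ofReal_iff (lt_of_le_of_lt b.toReal_nonneg hba)]
        exact hq2
  · rintro ⟨q, h1, h2⟩
    exact lt_of_le_of_lt h1 (not_le.mp h2)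

variable [MeasurableSpace Om]

/-- The σ-algebra of null-measurable sets as a `MeasurableSpace`. -/
private def nmSpace (P : Measure Om) : MeasurableSpace Om where
  MeasurableSet' s := NullMeasurableSet s P
  measurableSet_empty := MeasurableSet.empty.nullMeasurableSet
  measurableSet_compl _ hs := hs.compl
  measurableSet_iUnion _ hf := NullMeasurableSet.iUnion hf

private lemma nmSpace_le (P : Measure Om) :
    (inferInstance : MeasurableSpace Om) ≤ nmSpace P :=
  fun _ hs => hs.nullMeasurableSet

private lemma nullMeasurable_of_nmSpace {β : Type*} [MeasurableSpace β] {P : Measure Om}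
    {f : Om → β} (h : @Measurable Om β (nmSpace P) _ f) : NullMeasurable f P :=
  fun _ hs => h hs

private lemma nmSpace_measurable_of_Iic {P : Measure Om} {f : Om → ℝ≥0∞}
    (h : ∀ r : ℝ, NullMeasurableSet {ω | f ω ≤ ENNReal.ofReal r} P) :
    @Measurable Om ℝ≥0∞ (nmSpace P) _ f := by
  refine measurable_of_Iic (α := ℝ≥0∞) (δ := Om) (mδ := nmSpace P) (f := f) ?_
  intro a
  rcases eq_or_ne a ⊤ with rfl | ha
  · have : f ⁻¹' Set.Iic ⊤ = Set.univ := by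
      ext ω; simp
    rw [this]
    exact MeasurableSet.univ
  · have := h a.toReal
    rw [ENNReal.ofReal_toReal ha] at this
    exact this

private lemma filt_mono (P : Measure Om) (B : ℝ → Om → ℝ) (T : ℕ → Om → ℝ≥0∞)
    {s t : ℝ} (h : s ≤ t) : filt P B T s ≤ filt P B T t := by
  unfold filt
  refine sup_le_sup (sup_le_sup ?_ ?_) le_rfl
  · exact iSup_le fun u => le_iSup_of_le ⟨u.1, u.2.trans h⟩ le_rfl
  · exact iSup_le fun u => le_iSup_of_le ⟨u.1, u.2.trans h⟩ le_rfl

private lemma measurableSet_T_filt (P : Measure Om) (B : ℝ → Om → ℝ)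
    (T : ℕ → Om → ℝ≥0∞) {t s : ℝ} (hs : s ≤ t) (n : ℕ) :
    MeasurableSet[filt P B T t] {ω | T n ω ≤ ENNReal.ofReal s} := by
  have h1 : MeasurableSet[MeasurableSpace.generateFrom
      {A : Set Om | A = {ω | T n ω ≤ ENNReal.ofReal s}}] {ω | T n ω ≤ ENNReal.ofReal s} :=
    MeasurableSpace.measurableSet_generateFrom rfl
  have h2 : MeasurableSpace.generateFrom
      {A : Set Om | A = {ω | T n ω ≤ ENNReal.ofReal s}} ≤ filt P B T t := by
    refine le_sup_of_le_left (le_sup_of_le_right ?_)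
    exact le_iSup_of_le ⟨s, hs⟩ (le_iSup_of_le n le_rfl)
  exact h2 _ h1

private lemma filt_le_nm (P : Measure Om) {B : ℝ → Om → ℝ}
    (hB : ∀ t, Measurable (B t)) {T : ℕ → Om → ℝ≥0∞}
    (hT : ∀ (n : ℕ) (s : ℝ), NullMeasurableSet {ω | T n ω ≤ ENNReal.ofReal s} P) (t : ℝ) :
    filt P B T t ≤ nmSpace P := by
  unfold filt
  refine sup_le (sup_le ?_ ?_) ?_
  · refine iSup_le fun u => ?_
    exact measurable_iff_comap_le.mp ((hB u.1).mono (nmSpace_le P) le_rfl)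
  · refine iSup_le fun u => iSup_le fun n => MeasurableSpace.generateFrom_le ?_
    rintro A (rfl : A = _)
    exact hT n u.1
  · refine MeasurableSpace.generateFrom_le fun A hA => ?_
    exact NullMeasurableSet.of_null hA

end Aux

/-- under the uniform integrability conditions on `g`, the value `V_θ` is the
increasing limit of the values `V^{(n)}_θ` of the problems restricted to the first `n`
event times. -/
theorem statement13 {Om : Type*} [MeasurableSpace Om] (P : Measure Om) (W : ℝ → Om → ℝ)
    (β : ℝ) (th : ℝ → ℝ) (E : ℕ → Om → ℝ) (g : ℝ → ℝ)
    (hβ : 0 < β) (hW : IsBM P W 0) (hE : IsExpSeq P E 1 W)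
    (hthm : Measurable th) (hth0 : ∀ y, 0 ≤ th y)
    (hthloc : LocallyIntegrable th volume)
    (hgm : Measurable g) (hg0 : ∀ y : ℝ, 0 ≤ g y)
    (hsup : ∀ x : ℝ, tailSup P β g (fun t ω => x + W t ω) 0 < ⊤)
    (htail : ∀ x : ℝ,
      Tendsto (fun t : ℝ => tailSup P β g (fun t' ω => x + W t' ω) t) atTop (nhds 0)) :
    ∀ x : ℝ,
      Vval P β g (fun t ω => x + W t ω) (fun t ω => x + W t ω)
          (eventTime th (fun t ω => x + W t ω) E) =
        ⨆ n : ℕ, VvalN P β g (fun t ω => x + W t ω) (fun t ω => x + W t ω)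
          (eventTime th (fun t ω => x + W t ω) E) n := by
  classical
  haveI : IsProbabilityMeasure P := hW.isProb
  intro x
  set Bx : ℝ → Om → ℝ := fun t ω => x + W t ω with hBxdef
  set T : ℕ → Om → ℝ≥0∞ := eventTime th Bx E with hTdef
  -- the jointly measurable version of the shifted process
  set WL : Om × ℝ → ℝ := fun p => x + wlim W p with hWLdef
  have hWLm : Measurable WL := (measurable_wlim W hW.meas).const_add x
  set B' : ℝ → Om → ℝ := fun t ω => WL (ω, t) with hB'def
  have hgood : ∀ᵐ ω ∂P, ∀ t : ℝ, B' t ω = Bx t ω := by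
    filter_upwards [hW.cont] with ω hc t
    show x + wlim W (ω, t) = x + W t ω
    rw [wlim_eq hc]
  have hhazmono : ∀ (B : ℝ → Om → ℝ) (ω : Om), Monotone fun t => haz th B t ω := by
    intro B ω t₁ t₂ h
    exact lintegral_mono_set (Set.Ioc_subset_Ioc_right h)
  have hhaz : ∀ᵐ ω ∂P, ∀ t : ℝ, haz th Bx t ω = haz th B' t ω := by
    filter_upwards [hgood] with ω hg t
    exact lintegral_congr fun u => by rw [hg u]
  -- measurability of the hazard built from the measurable version
  have hHm : ∀ t : ℝ, Measurable fun ω => haz th B' t ω := by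
    intro t
    have hjoint : Measurable fun p : Om × ℝ =>
        (Set.univ ×ˢ Set.Ioc (0 : ℝ) t).indicator
          (fun p : Om × ℝ => ENNReal.ofReal (th (WL p))) p :=
      Measurable.indicator (ENNReal.measurable_ofReal.comp (hthm.comp hWLm))
        (MeasurableSet.univ.prod measurableSet_Ioc)
    have hmain := Measurable.lintegral_prod_right' (ν := (volume : Measure ℝ)) hjoint
    have heq : (fun ω => haz th B' t ω) = fun ω => ∫⁻ u,
        (Set.univ ×ˢ Set.Ioc (0 : ℝ) t).indicator
          (fun p : Om × ℝ => ENNReal.ofReal (th (WL p))) (ω, u) := by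
      funext ω
      rw [haz, ← lintegral_indicator measurableSet_Ioc]
      exact lintegral_congr fun u => by
        by_cases hu : u ∈ Set.Ioc (0 : ℝ) t <;>
          simp [Set.indicator_apply, Set.mem_prod, hu, hB'def]
    rw [heq]
    exact hmain
  -- measurable a.e.-versions of the event times
  set T' : ℕ → Om → ℝ≥0∞ := fun n ω =>
    ⨅ (q : ℚ) (_ : 0 ≤ (q : ℝ)) (_ : ENNReal.ofReal (expSum E n ω) ≤ haz th B' (q : ℝ) ω),
      ENNReal.ofReal (q : ℝ) with hT'def
  have hT'm : ∀ n, Measurable (T' n) := by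
    intro n
    refine Measurable.iInf fun q => ?_
    have hrw : (fun ω => ⨅ (_ : 0 ≤ (q : ℝ))
        (_ : ENNReal.ofReal (expSum E n ω) ≤ haz th B' (q : ℝ) ω), ENNReal.ofReal (q : ℝ)) =
        fun ω => if 0 ≤ (q : ℝ) ∧ ENNReal.ofReal (expSum E n ω) ≤ haz th B' (q : ℝ) ω
          then ENNReal.ofReal (q : ℝ) else ⊤ := by
      funext ω
      by_cases h1 : 0 ≤ (q : ℝ) <;>
        by_cases h2 : ENNReal.ofReal (expSum E n ω) ≤ haz th B' (q : ℝ) ω <;>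
          simp [h1, h2]
    rw [hrw]
    have hcm : Measurable fun ω => ENNReal.ofReal (expSum E n ω) :=
      ENNReal.measurable_ofReal.comp
        (Finset.measurable_sum (Finset.range n) fun k _ => hE.meas k)
    by_cases h1 : 0 ≤ (q : ℝ)
    · refine Measurable.ite ?_ measurable_const measurable_const
      have : {ω | 0 ≤ (q : ℝ) ∧ ENNReal.ofReal (expSum E n ω) ≤ haz th B' (q : ℝ) ω} =
          {ω | ENNReal.ofReal (expSum E n ω) ≤ haz th B' (q : ℝ) ω} := by
        ext ω; simp [h1]
      rw [this]
      exact measurableSet_le hcm (hHm (q : ℝ))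
    · have : (fun ω => if 0 ≤ (q : ℝ) ∧
          ENNReal.ofReal (expSum E n ω) ≤ haz th B' (q : ℝ) ω
          then ENNReal.ofReal (q : ℝ) else (⊤ : ℝ≥0∞)) = fun _ => (⊤ : ℝ≥0∞) := by
        funext ω; simp [h1]
      rw [this]
      exact measurable_const
  have hTT' : ∀ᵐ ω ∂P, ∀ n, T n ω = T' n ω := by
    filter_upwards [hhaz] with ω hh n
    have h1 : T n ω = ⨅ (q : ℚ) (_ : 0 ≤ (q : ℝ))
        (_ : ENNReal.ofReal (expSum E n ω) ≤ haz th Bx (q : ℝ) ω), ENNReal.ofReal (q : ℝ) := by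
      rw [hTdef]
      exact iInf_time_rat (hhazmono Bx ω) _
    rw [h1, hT'def]
    exact iInf_congr fun q => by rw [hh (q : ℝ)]
  -- event times are a.e. monotone
  have hE0 : ∀ᵐ ω ∂P, ∀ k, 0 ≤ E k ω := by
    rw [ae_all_iff]
    intro k
    have hlaw := hE.law k 0 le_rfl
    rw [mul_zero, neg_zero, Real.exp_zero, ENNReal.ofReal_one] at hlaw
    have hms : MeasurableSet {ω | (0 : ℝ) < E k ω} :=
      measurableSet_lt measurable_const (hE.meas k)
    have hc0 : P {ω | (0 : ℝ) < E k ω}ᶜ = 0 := by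
      rw [measure_compl hms (measure_ne_top _ _), hlaw, measure_univ, tsub_self]
    refine ae_iff.mpr (measure_mono_null (fun ω h => ?_) hc0)
    exact fun h0 => h (le_of_lt h0)
  have hTmono : ∀ᵐ ω ∂P, ∀ m k, m ≤ k → T m ω ≤ T k ω := by
    filter_upwards [hE0] with ω h0 m k hmk
    have hsum : expSum E m ω ≤ expSum E k ω :=
      Finset.sum_le_sum_of_subset_of_nonneg (Finset.range_subset_range.mpr hmk)
        fun i _ _ => h0 i
    rw [hTdef]
    show eventTime th Bx E m ω ≤ eventTime th Bx E k ω
    unfold eventTime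
    exact le_iInf fun t' => le_iInf fun ht' => le_iInf fun hc =>
      iInf_le_of_le t' (iInf_le_of_le ht'
        (iInf_le _ ((ENNReal.ofReal_le_ofReal hsum).trans hc)))
  -- null-measurability of the event-time level sets
  have hTq : ∀ (n : ℕ) (c : ℝ≥0∞), NullMeasurableSet {ω | T n ω ≤ c} P := by
    intro n c
    have hmeq : {ω | T' n ω ≤ c} =ᵐ[P] {ω | T n ω ≤ c} := by
      rw [Filter.eventuallyEq_set]
      filter_upwards [hTT'] with ω hω
      simp only [Set.mem_setOf_eq, hω n]
    exact NullMeasurableSet.congr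
      ((measurableSet_le (hT'm n) measurable_const).nullMeasurableSet) hmeq
  refine le_antisymm ?_ ?_
  · -- hard direction
    refine iSup_le fun τ => iSup_le fun hst => iSup_le fun hvals => ?_
    have hBxm : ∀ t, Measurable (Bx t) := fun t => (hW.meas t).const_add x
    have hτIic : ∀ r : ℝ, NullMeasurableSet {ω | τ ω ≤ ENNReal.ofReal r} P := by
      intro r
      exact filt_le_nm P hBxm (fun n s => hTq n _) r _ (hst r)
    have hτnm : @Measurable Om ℝ≥0∞ (nmSpace P) _ τ := nmSpace_measurable_of_Iic hτIic
    have hAnm : ∀ n, MeasurableSet[nmSpace P] {ω | τ ω ≤ T n ω} := by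
      intro n
      have hdecomp : {ω | T n ω < τ ω} = ⋃ q : ℚ,
          ({ω | T n ω ≤ ENNReal.ofReal (q : ℝ)} ∩ {ω | τ ω ≤ ENNReal.ofReal (q : ℝ)}ᶜ) := by
        ext ω
        simp only [Set.mem_setOf_eq, Set.mem_iUnion, Set.mem_inter_iff, Set.mem_compl_iff]
        exact lt_iff_exists_rat (τ ω) (T n ω)
      have h2 : {ω | τ ω ≤ T n ω} = {ω | T n ω < τ ω}ᶜ := by
        ext ω; simp [not_lt]
      rw [h2, hdecomp]
      exact MeasurableSet.compl (MeasurableSet.iUnion fun q =>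
        MeasurableSet.inter (hTq n _) (MeasurableSet.compl (hτIic (q : ℝ))))
    set σa : ℕ → Om → ℝ≥0∞ := fun n ω => if τ ω ≤ T n ω then τ ω else ⊤ with hσadef
    have hσnm : ∀ n, @Measurable Om ℝ≥0∞ (nmSpace P) _ (σa n) := fun n =>
      Measurable.ite (hAnm n) hτnm measurable_const
    have ppoint : ∀ (σ : Om → ℝ≥0∞) (ω : Om), payoff β g Bx σ ω =
        if σ ω < ⊤ then
          ENNReal.ofReal (Real.exp (-β * (σ ω).toReal) * g (Bx (σ ω).toReal ω))
        else 0 := by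
      intro σ ω
      simp [payoff, Set.indicator_apply]
    have hpω : ∀ n ω, payoff β g Bx (σa n) ω =
        if τ ω ≤ T n ω then payoff β g Bx τ ω else 0 := by
      intro n ω
      by_cases h : τ ω ≤ T n ω
      · rw [if_pos h, ppoint, ppoint]
        have hs : σa n ω = τ ω := by simp [hσadef, h]
        rw [hs]
      · rw [if_neg h, ppoint]
        have hs : σa n ω = ⊤ := by simp [hσadef, h]
        rw [hs]
        simp
    have hpmeas : ∀ n, AEMeasurable (payoff β g Bx (σa n)) P := by
      intro n
      set pt : Om → ℝ≥0∞ := fun ω => if σa n ω < ⊤ then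
          ENNReal.ofReal (Real.exp (-β * (σa n ω).toReal) * g (B' (σa n ω).toReal ω))
        else 0 with hptdef
      have hptnm : @Measurable Om ℝ≥0∞ (nmSpace P) _ pt := by
        have hid : @Measurable Om Om (nmSpace P) _ id := fun s hs => hs.nullMeasurableSet
        have htr : @Measurable Om ℝ (nmSpace P) _ fun ω => (σa n ω).toReal :=
          ENNReal.measurable_toReal.comp (hσnm n)
        have hpair : @Measurable Om (Om × ℝ) (nmSpace P) _
            fun ω => ((ω : Om), (σa n ω).toReal) := hid.prodMk htr
        have hWL' : @Measurable Om ℝ (nmSpace P) _ fun ω => WL (ω, (σa n ω).toReal) :=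
          hWLm.comp hpair
        have hbr : @Measurable Om ℝ≥0∞ (nmSpace P) _ fun ω =>
            ENNReal.ofReal (Real.exp (-β * (σa n ω).toReal) * g (B' (σa n ω).toReal ω)) := by
          refine ENNReal.measurable_ofReal.comp (Measurable.mul ?_ (hgm.comp hWL'))
          exact (htr.const_mul (-β)).exp
        have hset : MeasurableSet[nmSpace P] {ω | σa n ω < ⊤} := hσnm n measurableSet_Iio
        exact Measurable.ite hset hbr measurable_const
      refine AEMeasurable.congr ((nullMeasurable_of_nmSpace hptnm).aemeasurable) ?_
      filter_upwards [hgood] with ω hg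
      by_cases h : σa n ω < ⊤
      · simp only [hptdef, ppoint, if_pos h, hg]
      · simp only [hptdef, ppoint, if_neg h]
    have hstσ : ∀ n, IsStopTime (filt P Bx T) (σa n) := by
      intro n t
      have hident : {ω | σa n ω ≤ ENNReal.ofReal t} =
          {ω | τ ω ≤ ENNReal.ofReal t} ∩
            (⋃ q : {q : ℚ // (q : ℝ) ≤ t},
              ({ω | T n ω ≤ ENNReal.ofReal ((q : ℚ) : ℝ)} ∩
                {ω | τ ω ≤ ENNReal.ofReal ((q : ℚ) : ℝ)}ᶜ))ᶜ := by
        ext ω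
        constructor
        · intro h
          have h' : σa n ω ≤ ENNReal.ofReal t := h
          have hτT : τ ω ≤ T n ω := by
            by_contra hc
            have hs : σa n ω = ⊤ := by simp [hσadef, hc]
            rw [hs, top_le_iff] at h'
            exact ENNReal.ofReal_ne_top h'
          have hs : σa n ω = τ ω := by simp [hσadef, hτT]
          rw [hs] at h'
          refine ⟨h', ?_⟩
          intro hmem
          rw [Set.mem_iUnion] at hmem
          obtain ⟨q, hq1, hq2⟩ := hmem
          exact hq2 (hτT.trans hq1)
        · rintro ⟨h1, h2⟩
          have hτT : τ ω ≤ T n ω := by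
            by_contra hc
            obtain ⟨q, hq1, hq2⟩ := (lt_iff_exists_rat (τ ω) (T n ω)).mp (not_le.mp hc)
            have hqoft : ENNReal.ofReal (q : ℝ) < ENNReal.ofReal t :=
              lt_of_lt_of_le (not_le.mp hq2) h1
            have hqt : (q : ℝ) ≤ t := by
              by_contra hqt
              exact absurd hqoft
                (not_lt.mpr (ENNReal.ofReal_le_ofReal (le_of_not_ge hqt)))
            exact h2 (Set.mem_iUnion.mpr ⟨⟨q, hqt⟩, ⟨hq1, hq2⟩⟩)
          show σa n ω ≤ ENNReal.ofReal t
          have hs : σa n ω = τ ω := by simp [hσadef, hτT]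
          rw [hs]
          exact h1
      show MeasurableSet[filt P Bx T t] {ω | σa n ω ≤ ENNReal.ofReal t}
      rw [hident]
      refine (hst t).inter (MeasurableSet.compl (MeasurableSet.iUnion fun q => ?_))
      exact (measurableSet_T_filt P Bx T q.2 n).inter
        ((filt_mono P Bx T q.2 _ (hst ((q : ℚ) : ℝ))).compl)
    have hvle : ∀ n : ℕ, ValuesInLe P T (n + 1) (σa (n + 1)) := by
      intro n
      filter_upwards [hvals, hTmono] with ω hv hm
      by_cases h : τ ω ≤ T (n + 1) ω
      · have hσ : σa (n + 1) ω = τ ω := by simp [hσadef, h]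
        rcases hv with h1 | ⟨k, hk1, hkeq⟩
        · exact Or.inl (by rw [hσ, h1])
        · by_cases hkn : k ≤ n + 1
          · exact Or.inr ⟨k, hk1, hkn, by rw [hσ, hkeq]⟩
          · refine Or.inr ⟨n + 1, by omega, le_rfl, ?_⟩
            rw [hσ]
            refine le_antisymm h ?_
            rw [hkeq]
            exact hm (n + 1) k (by omega)
      · exact Or.inl (by simp [hσadef, h])
    have hmonop : ∀ᵐ ω ∂P, Monotone fun n => payoff β g Bx (σa (n + 1)) ω := by
      filter_upwards [hTmono] with ω hm a b hab
      show payoff β g Bx (σa (a + 1)) ω ≤ payoff β g Bx (σa (b + 1)) ω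
      rw [hpω, hpω]
      by_cases h1 : τ ω ≤ T (a + 1) ω
      · rw [if_pos h1, if_pos (h1.trans (hm (a + 1) (b + 1) (by omega)))]
      · rw [if_neg h1]
        exact zero_le
    have hsup2 : (fun ω => ⨆ n, payoff β g Bx (σa (n + 1)) ω) =ᵐ[P]
        payoff β g Bx τ := by
      filter_upwards [hvals, hTmono] with ω hv hm
      rcases hv with h1 | ⟨k, hk1, hkeq⟩
      · have hz : payoff β g Bx τ ω = 0 := by
          rw [ppoint τ ω, if_neg (by rw [h1]; exact lt_irrefl ⊤)]
        show (⨆ n, payoff β g Bx (σa (n + 1)) ω) = payoff β g Bx τ ω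
        rw [hz]
        refine le_antisymm (iSup_le fun n => ?_) (zero_le)
        show payoff β g Bx (σa (n + 1)) ω ≤ 0
        rw [hpω]
        split_ifs
        · exact le_of_eq hz
        · exact le_rfl
      · show (⨆ n, payoff β g Bx (σa (n + 1)) ω) = payoff β g Bx τ ω
        refine le_antisymm (iSup_le fun n => ?_) ?_
        · show payoff β g Bx (σa (n + 1)) ω ≤ payoff β g Bx τ ω
          rw [hpω]
          split_ifs
          · exact le_rfl
          · exact zero_le
        · refine le_iSup_of_le k ?_
          show payoff β g Bx τ ω ≤ payoff β g Bx (σa (k + 1)) ω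
          rw [hpω, if_pos]
          rw [hkeq]
          exact hm k (k + 1) (by omega)
    calc stopVal P β g Bx τ = ∫⁻ ω, ⨆ n, payoff β g Bx (σa (n + 1)) ω ∂P := by
          rw [stopVal]
          exact (lintegral_congr_ae hsup2).symm
      _ = ⨆ n, ∫⁻ ω, payoff β g Bx (σa (n + 1)) ω ∂P :=
          lintegral_iSup' (fun n => hpmeas (n + 1)) hmonop
      _ ≤ ⨆ n, VvalN P β g Bx Bx T (n + 1) := by
          refine iSup_mono fun n => ?_
          show stopVal P β g Bx (σa (n + 1)) ≤ VvalN P β g Bx Bx T (n + 1)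
          exact le_iSup_of_le (σa (n + 1)) (le_iSup_of_le (hstσ (n + 1))
            (le_iSup_of_le (hvle n) le_rfl))
      _ ≤ ⨆ n, VvalN P β g Bx Bx T n :=
          iSup_le fun n => le_iSup (fun m => VvalN P β g Bx Bx T m) (n + 1)
  · -- easy direction
    refine iSup_le fun n => iSup_le fun τ => iSup_le fun hst => iSup_le fun hv => ?_
    have hv' : ValuesIn P T τ := by
      filter_upwards [hv] with ω h
      rcases h with h | ⟨k, h1, _, he⟩
      · exact Or.inl h
      · exact Or.inr ⟨k, h1, he⟩
    exact le_iSup_of_le τ (le_iSup_of_le hst (le_iSup_of_le hv' le_rfl))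

end PoissonOS
end
end

section
/- Let $(B_t)_{t\ge0}$ be a standard one-dimensional Brownian motion started at $x\in\mathbb{R}$, let $\beta>0$ and $g(y)=\mathbf{1}_{\{y\in\mathbb{Q}\}}$. Then: (i) the classical optimal stopping value satisfies $w(x):=\sup_\tau\mathbb{E}^x[e^{-\beta\tau}\mathbf{1}_{\{B_\tau\in\mathbb{Q}\}}\mathbf{1}_{\{\tau<\infty\}}]=1$, where the supremum is over all stopping times $\tau$ of the (augmented) natural filtration of $B$; (ii) if $(E_k)_{k\ge1}$ are i.i.d. rate-$\lambda$ exponential random variables independent of $B$ and $T_n=E_1+\cdots+E_n$, then for every stopping time $\tau$ of the augmented filtration generated by $B$ and $N_t=\#\{n:T_n\le t\}$ with $\tau\in\{T_n:n\ge1\}\cup\{\infty\}$ almost surely, $\mathbb{E}^x[e^{-\beta\tau}\mathbf{1}_{\{B_\tau\in\mathbb{Q}\}}\mathbf{1}_{\{\tau<\infty\}}]=0$; hence the Poisson optimal stopping value is $V_\lambda(x)=0<w(x)$. -/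
open MeasureTheory ProbabilityTheory Real Set Filter
open scoped ENNReal NNReal

noncomputable section

namespace PoissonOS

/-- The augmented natural filtration of the process `B`. -/
def filtB {Om : Type*} [MeasurableSpace Om] (P : Measure Om) (B : ℝ → Om → ℝ)
    (t : ℝ) : MeasurableSpace Om :=
  (⨆ s : {s : ℝ // s ≤ t}, MeasurableSpace.comap (B s.1) inferInstance) ⊔ nullSets P

/-- Value of the classical optimal stopping problem: supremum over all stopping times
of the augmented natural filtration of `B`. -/
def wval {Om : Type*} [MeasurableSpace Om] (P : Measure Om) (β : ℝ) (g : ℝ → ℝ)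
    (B : ℝ → Om → ℝ) : ℝ≥0∞ :=
  ⨆ (τ : Om → ℝ≥0∞) (_ : IsStopTime (filtB P B) τ), stopVal P β g B τ

/-- The indicator function of the rationals. -/
def ratInd : ℝ → ℝ := Set.indicator (Set.range ((↑) : ℚ → ℝ)) fun _ => 1


section AuxLemmas

variable {Om : Type*} [MeasurableSpace Om]

lemma mem_nullSets {P : Measure Om} {N : Set Om} (h : P N = 0) :
    MeasurableSet[nullSets P] N :=
  MeasurableSpace.measurableSet_generateFrom h

lemma measurableSet_of_null_diffs {Om' : Type*} {m : MeasurableSpace Om'}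
    [mOm : MeasurableSpace Om'] {P : Measure Om'}
    (hm : nullSets P ≤ m) {A M : Set Om'} (hM : MeasurableSet[m] M)
    (h1 : P (A \ M) = 0) (h2 : P (M \ A) = 0) : MeasurableSet[m] A := by
  have hA : A = (M ∩ (M \ A)ᶜ) ∪ (A \ M) := by
    ext y
    by_cases hy : y ∈ M <;> simp [Set.mem_diff, hy] <;> tauto
  rw [hA]
  have g1 : MeasurableSet[m] (A \ M) := hm _ (mem_nullSets h1)
  have g2 : MeasurableSet[m] (M \ A) := hm _ (mem_nullSets h2)
  exact MeasurableSet.union (MeasurableSet.inter hM (MeasurableSet.compl g2)) g1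

lemma gaussianReal_singleton {v : ℝ≥0} (hv : v ≠ 0) (y : ℝ) :
    gaussianReal 0 v {y} = 0 := by
  rw [gaussianReal_apply 0 hv]
  exact setLIntegral_measure_zero _ _ (measure_singleton y)

lemma gaussianReal_Ioo_le {v : ℝ≥0} (hv : v ≠ 0) (c d : ℝ) :
    gaussianReal 0 v (Set.Ioo c d) ≤
      ENNReal.ofReal ((d - c) * (Real.sqrt (2 * π * v))⁻¹) := by
  rw [gaussianReal_apply 0 hv]
  have hpt : ∀ y : ℝ, gaussianPDF 0 v y ≤ ENNReal.ofReal ((Real.sqrt (2 * π * v))⁻¹) := by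
    intro y
    refine ENNReal.ofReal_le_ofReal ?_
    unfold gaussianPDFReal
    have h1 : Real.exp (-(y - 0) ^ 2 / (2 * v)) ≤ 1 := by
      rw [show (1 : ℝ) = Real.exp 0 by simp]
      apply Real.exp_le_exp.2
      apply div_nonpos_of_nonpos_of_nonneg
      · simp [sq_nonneg]
      · positivity
    calc (Real.sqrt (2 * π * v))⁻¹ * Real.exp (-(y - 0) ^ 2 / (2 * v))
        ≤ (Real.sqrt (2 * π * v))⁻¹ * 1 := by
          apply mul_le_mul_of_nonneg_left h1 (by positivity)
      _ = (Real.sqrt (2 * π * v))⁻¹ := mul_one _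
  calc ∫⁻ y in Set.Ioo c d, gaussianPDF 0 v y
      ≤ ∫⁻ _ in Set.Ioo c d, ENNReal.ofReal ((Real.sqrt (2 * π * v))⁻¹) :=
        lintegral_mono fun y => hpt y
    _ = ENNReal.ofReal ((Real.sqrt (2 * π * v))⁻¹) * volume (Set.Ioo c d) :=
        setLIntegral_const _ _
    _ = ENNReal.ofReal ((Real.sqrt (2 * π * v))⁻¹) * ENNReal.ofReal (d - c) := by
        rw [Real.volume_Ioo]
    _ = ENNReal.ofReal ((d - c) * (Real.sqrt (2 * π * v))⁻¹) := by
        rw [← ENNReal.ofReal_mul (by positivity), mul_comm]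

lemma bm_point {P : Measure Om} {B : ℝ → Om → ℝ} {x : ℝ} (hB : IsBM P B x)
    {t : ℝ} (ht : 0 < t) (q : ℝ) : P {ω | B t ω = q} = 0 := by
  have hv : Real.toNNReal t ≠ 0 := by
    simp only [ne_eq, Real.toNNReal_eq_zero, not_le]
    exact ht
  have hmap := hB.gauss 0 t le_rfl ht.le
  rw [sub_zero] at hmap
  have hmeas : Measurable fun ω => B t ω - B 0 ω := (hB.meas t).sub (hB.meas 0)
  have h1 : P {ω | B t ω - B 0 ω = q - x} = 0 := by
    have heq : {ω | B t ω - B 0 ω = q - x} = (fun ω => B t ω - B 0 ω) ⁻¹' {q - x} := rfl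
    rw [heq, ← Measure.map_apply hmeas (measurableSet_singleton _), hmap,
      gaussianReal_singleton hv]
  have h2 : P {ω | ¬ B 0 ω = x} = 0 := ae_iff.1 hB.init
  refine measure_mono_null ?_ (measure_union_null h1 h2)
  intro ω hω
  by_cases h0 : B 0 ω = x
  · left
    simp only [Set.mem_setOf_eq] at hω ⊢
    rw [h0, hω]
  · right; exact h0

lemma bm_rat {P : Measure Om} {B : ℝ → Om → ℝ} {x : ℝ} (hB : IsBM P B x)
    {t : ℝ} (ht : 0 < t) : P {ω | B t ω ∈ Set.range ((↑) : ℚ → ℝ)} = 0 := by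
  refine measure_mono_null ?_ (measure_iUnion_null fun q : ℚ => bm_point hB ht (q : ℝ))
  rintro ω ⟨q, hq⟩
  exact Set.mem_iUnion.2 ⟨q, hq.symm⟩

end AuxLemmas


section Part2

/-- Type synonym for `Om` carrying the path σ-algebra of `B`. -/
def Path {Om : Type*} [MeasurableSpace Om] (B : ℝ → Om → ℝ) : Type _ := Om

instance pathMS {Om : Type*} [MeasurableSpace Om] {B : ℝ → Om → ℝ} :
    MeasurableSpace (Path B) := (pathSigma B : MeasurableSpace Om)

/-- Dyadic upper approximation of a real number. -/
def rup (m : ℕ) (t : ℝ) : ℝ := (⌈t * 2 ^ m⌉ : ℤ) / 2 ^ m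

lemma rup_ge (m : ℕ) (t : ℝ) : t ≤ rup m t := by
  rw [rup, le_div_iff₀ (by positivity)]
  exact Int.le_ceil _

lemma rup_lt (m : ℕ) (t : ℝ) : rup m t < t + ((2 : ℝ) ^ m)⁻¹ := by
  rw [rup, div_lt_iff₀ (by positivity)]
  calc ((⌈t * 2 ^ m⌉ : ℤ) : ℝ) < t * 2 ^ m + 1 := Int.ceil_lt_add_one _
    _ = (t + ((2 : ℝ) ^ m)⁻¹) * 2 ^ m := by field_simp

lemma rup_tendsto (t : ℝ) : Filter.Tendsto (fun m => rup m t) Filter.atTop (nhds t) := by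
  have h2 : Filter.Tendsto (fun m : ℕ => t + ((2 : ℝ) ^ m)⁻¹) Filter.atTop (nhds t) := by
    have : Filter.Tendsto (fun m : ℕ => ((2 : ℝ) ^ m)⁻¹) Filter.atTop (nhds 0) := by
      simpa [inv_pow] using
        tendsto_pow_atTop_nhds_zero_of_lt_one (by norm_num : (0:ℝ) ≤ 2⁻¹)
          (by norm_num : (2:ℝ)⁻¹ < 1)
    simpa using tendsto_const_nhds.add this
  exact tendsto_of_tendsto_of_tendsto_of_le_of_le tendsto_const_nhds h2
    (fun m => rup_ge m t) (fun m => (rup_lt m t).le)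

variable {Om : Type*} [MeasurableSpace Om]

lemma pathSigma_le {B : ℝ → Om → ℝ} (h : ∀ t, Measurable (B t)) :
    pathSigma B ≤ (inferInstance : MeasurableSpace Om) :=
  iSup_le fun t => measurable_iff_comap_le.1 (h t)

lemma measurable_B_path {B : ℝ → Om → ℝ} (t : ℝ) :
    Measurable (fun ω : Path B => B t ω) := by
  intro s hs
  exact le_iSup (fun u : ℝ => MeasurableSpace.comap (B u) inferInstance) t _ ⟨s, hs, rfl⟩

lemma measurable_rupEval {B : ℝ → Om → ℝ} (m : ℕ) :
    Measurable (fun p : ℝ × Path B => B (rup m p.1) p.2) := by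
  have hH : Measurable (fun pr : Path B × ℤ => B ((pr.2 : ℝ) / 2 ^ m) pr.1) := by
    refine measurable_from_prod_countable_left fun k => ?_
    exact measurable_B_path ((k : ℝ) / 2 ^ m)
  have : (fun p : ℝ × Path B => B (rup m p.1) p.2) =
      (fun pr : Path B × ℤ => B ((pr.2 : ℝ) / 2 ^ m) pr.1) ∘
        (fun p : ℝ × Path B => (p.2, ⌈p.1 * 2 ^ m⌉)) := rfl
  rw [this]
  exact hH.comp (measurable_snd.prodMk ((measurable_fst.mul_const _).ceil))

/-- Key lemma: a.s. the Brownian path at the random time `expSum E n` avoids the rationals. -/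
lemma bm_expSum_not_rat {P : Measure Om} {B : ℝ → Om → ℝ} {x lam : ℝ} {E : ℕ → Om → ℝ}
    (hB : IsBM P B x) (hE : IsExpSeq P E lam B) {n : ℕ} (hn : 1 ≤ n) :
    ∀ᵐ ω ∂P, B (expSum E n ω) ω ∉ Set.range ((↑) : ℚ → ℝ) := by
  haveI := hB.isProb
  set S : Om → ℝ := expSum E n with hS
  have hSmeas : Measurable S := by
    apply Finset.measurable_sum
    exact fun k _ => hE.meas k
  have hSmeas' : Measurable[⨆ k : ℕ, MeasurableSpace.comap (E k) inferInstance] S := by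
    apply Finset.measurable_sum
    intro k _
    exact measurable_iff_comap_le.2
      (le_iSup (fun k : ℕ => MeasurableSpace.comap (E k) inferInstance) k)
  have hpathle : pathSigma B ≤ (inferInstance : MeasurableSpace Om) := pathSigma_le hB.meas
  set P' : Measure (Path B) := P.trim hpathle with hP'
  haveI : IsProbabilityMeasure P' := by
    constructor
    exact (trim_measurableSet_eq hpathle MeasurableSet.univ).trans measure_univ
  set Φ : Om → ℝ × Path B := fun ω => (S ω, ω) with hΦdef
  have hΦ : Measurable Φ := hSmeas.prodMk (measurable_id'' hpathle)
  haveI : IsProbabilityMeasure (P.map S) := Measure.isProbabilityMeasure_map hSmeas.aemeasurable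
  have hprod : (P.map S).prod P' = P.map Φ := by
    apply Measure.prod_eq
    intro s A hs hA
    rw [Measure.map_apply hΦ (hs.prod hA)]
    have hpre : Φ ⁻¹' (s ×ˢ A) = (S ⁻¹' s) ∩ A := rfl
    rw [hpre, (Indep_iff _ _ P).1 hE.indep _ _ (hSmeas' hs) hA,
      ← Measure.map_apply hSmeas hs]
    congr 1
    exact (trim_measurableSet_eq hpathle hA).symm
  -- the limit event
  set Aq : ℚ → Set (ℝ × Path B) := fun q =>
    {p | Filter.Tendsto (fun m => B (rup m p.1) p.2) Filter.atTop (nhds (q : ℝ))} with hAq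
  have hAqMeas : ∀ q : ℚ, MeasurableSet (Aq q) := fun q =>
    measurableSet_tendsto (nhds (q : ℝ)) fun m => measurable_rupEval m
  set Aall : Set (ℝ × Path B) := ⋃ q : ℚ, Aq q with hAall
  have hAallMeas : MeasurableSet Aall := MeasurableSet.iUnion hAqMeas
  -- the main measure computation
  have hEk : ∀ k : ℕ, ∀ᵐ ω ∂P, 0 < E k ω := by
    intro k
    have h1 : P {ω | 0 < E k ω} = 1 := by
      simpa using hE.law k 0 le_rfl
    have hmeas : MeasurableSet {ω | 0 < E k ω} := measurableSet_lt measurable_const (hE.meas k)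
    have : P {ω | 0 < E k ω}ᶜ = 0 := by
      rw [prob_compl_eq_one_sub hmeas, h1, tsub_self]
    exact ae_iff.2 (by simpa [Set.compl_setOf] using this)
  have hSpos : ∀ᵐ ω ∂P, 0 < S ω := by
    filter_upwards [ae_all_iff.2 hEk] with ω hω
    exact Finset.sum_pos (fun k _ => hω k) (Finset.nonempty_range_iff.2 (by omega))
  have hMapPos : ∀ᵐ t ∂(P.map S), 0 < t :=
    (ae_map_iff hSmeas.aemeasurable measurableSet_Ioi).2 hSpos
  have hslice : ∀ t : ℝ, 0 < t → P' (Prod.mk t ⁻¹' Aall) = 0 := by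
    intro t ht
    have hsliceMeas : MeasurableSet[pathSigma B] (Prod.mk t ⁻¹' Aall) :=
      measurable_prodMk_left hAallMeas
    rw [show P' (Prod.mk t ⁻¹' Aall) = P (Prod.mk t ⁻¹' Aall) from
      trim_measurableSet_eq hpathle hsliceMeas]
    have hsub : (Prod.mk t ⁻¹' Aall : Set Om) ⊆
        {ω | B t ω ∈ Set.range ((↑) : ℚ → ℝ)} ∪ {ω | ¬ Continuous fun s : ℝ => B s ω} := by
      intro ω hω
      by_cases hc : Continuous fun s : ℝ => B s ω
      · left
        obtain ⟨q, hq⟩ := Set.mem_iUnion.1 hω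
        have h2 : Filter.Tendsto (fun m => B (rup m t) ω) Filter.atTop (nhds (B t ω)) :=
          (hc.tendsto t).comp (rup_tendsto t)
        exact ⟨q, (tendsto_nhds_unique h2 hq).symm⟩
      · right; exact hc
    exact measure_mono_null hsub
      (measure_union_null (bm_rat hB ht) (ae_iff.1 hB.cont))
  have hmain : P (Φ ⁻¹' Aall) = 0 := by
    rw [← Measure.map_apply hΦ hAallMeas, ← hprod, Measure.prod_apply hAallMeas]
    have hae0 : (fun t => P' (Prod.mk t ⁻¹' Aall)) =ᵐ[P.map S] (fun _ => 0) := by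
      filter_upwards [hMapPos] with t ht
      exact hslice t ht
    rw [lintegral_congr_ae hae0, lintegral_zero]
  -- conclude
  have hsub2 : {ω | ¬ B (S ω) ω ∉ Set.range ((↑) : ℚ → ℝ)} ⊆
      Φ ⁻¹' Aall ∪ {ω | ¬ Continuous fun s : ℝ => B s ω} := by
    intro ω hω
    simp only [Set.mem_setOf_eq, not_not] at hω
    by_cases hc : Continuous fun s : ℝ => B s ω
    · left
      obtain ⟨q, hq⟩ := hω
      refine Set.mem_iUnion.2 ⟨q, ?_⟩
      have h2 : Filter.Tendsto (fun m => B (rup m (S ω)) ω) Filter.atTop (nhds (B (S ω) ω)) :=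
        (hc.tendsto (S ω)).comp (rup_tendsto (S ω))
      rw [← hq] at h2
      exact h2
    · right; exact hc
  exact ae_iff.2 (measure_mono_null hsub2
    (measure_union_null hmain (ae_iff.1 hB.cont)))

end Part2


section Value

variable {Om : Type*} [MeasurableSpace Om]

lemma stopVal_eq_zero {P : Measure Om} {B : ℝ → Om → ℝ} {x β lam : ℝ} {E : ℕ → Om → ℝ}
    (hB : IsBM P B x) (hE : IsExpSeq P E lam B) (τ : Om → ℝ≥0∞)
    (hv : ValuesIn P (fun n ω => ENNReal.ofReal (expSum E n ω)) τ) :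
    stopVal P β ratInd B τ = 0 := by
  haveI := hB.isProb
  have hEk : ∀ k : ℕ, ∀ᵐ ω ∂P, 0 < E k ω := by
    intro k
    have h1 : P {ω | 0 < E k ω} = 1 := by simpa using hE.law k 0 le_rfl
    have hmeas : MeasurableSet {ω | 0 < E k ω} := measurableSet_lt measurable_const (hE.meas k)
    have h0 : P {ω | 0 < E k ω}ᶜ = 0 := by
      rw [prob_compl_eq_one_sub hmeas, h1, tsub_self]
    exact ae_iff.2 (by simpa [Set.compl_setOf] using h0)
  have hnonneg : ∀ᵐ ω ∂P, ∀ m : ℕ, 0 ≤ expSum E m ω := by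
    filter_upwards [ae_all_iff.2 hEk] with ω hω m
    exact Finset.sum_nonneg fun k _ => (hω k).le
  have hrat : ∀ᵐ ω ∂P, ∀ m : ℕ, 1 ≤ m → B (expSum E m ω) ω ∉ Set.range ((↑) : ℚ → ℝ) := by
    rw [ae_all_iff]
    intro m
    rcases Nat.eq_zero_or_pos m with hm | hm
    · exact ae_of_all _ fun ω h => absurd h (by omega)
    · filter_upwards [bm_expSum_not_rat hB hE hm] with ω hω _
      exact hω
  have hzero : ∀ᵐ ω ∂P, payoff β ratInd B τ ω = 0 := by
    filter_upwards [hv, hnonneg, hrat] with ω hτ h0 h1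
    rcases hτ with htop | ⟨m, hm, heq⟩
    · exact Set.indicator_of_notMem (by simp [htop]) _
    · have hlt : τ ω < ⊤ := by rw [heq]; exact ENNReal.ofReal_lt_top
      rw [payoff, Set.indicator_of_mem (by exact hlt)]
      have htoReal : (τ ω).toReal = expSum E m ω := by
        rw [heq, ENNReal.toReal_ofReal (h0 m)]
      rw [htoReal]
      have : ratInd (B (expSum E m ω) ω) = 0 :=
        Set.indicator_of_notMem (h1 m hm) _
      rw [this, mul_zero, ENNReal.ofReal_zero]
  rw [stopVal, lintegral_congr_ae hzero, lintegral_zero]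

lemma stopVal_le_one {P : Measure Om} [IsProbabilityMeasure P] {B : ℝ → Om → ℝ} {β : ℝ}
    (hβ : 0 < β) (τ : Om → ℝ≥0∞) : stopVal P β ratInd B τ ≤ 1 := by
  have hpt : ∀ ω, payoff β ratInd B τ ω ≤ 1 := by
    intro ω
    rw [payoff]
    refine Set.indicator_apply_le' (fun _ => ?_) (fun _ => zero_le)
    rw [show (1 : ℝ≥0∞) = ENNReal.ofReal 1 by simp]
    apply ENNReal.ofReal_le_ofReal
    have h1 : Real.exp (-β * (τ ω).toReal) ≤ 1 := by
      rw [show (1 : ℝ) = Real.exp 0 by simp]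
      apply Real.exp_le_exp.2
      apply mul_nonpos_of_nonpos_of_nonneg (by linarith) ENNReal.toReal_nonneg
    have h2 : ratInd (B (τ ω).toReal ω) ≤ 1 := by
      rw [ratInd]
      by_cases h : B (τ ω).toReal ω ∈ Set.range ((↑) : ℚ → ℝ)
      · rw [Set.indicator_of_mem h]
      · rw [Set.indicator_of_notMem h]; norm_num
    have h3 : 0 ≤ ratInd (B (τ ω).toReal ω) := by
      rw [ratInd]
      by_cases h : B (τ ω).toReal ω ∈ Set.range ((↑) : ℚ → ℝ)
      · rw [Set.indicator_of_mem h]; norm_num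
      · rw [Set.indicator_of_notMem h]
    exact mul_le_one₀ h1 h3 h2
  calc stopVal P β ratInd B τ ≤ ∫⁻ _, 1 ∂P := lintegral_mono hpt
    _ = 1 := by simp

end Value


section Part1

variable {Om : Type*} [MeasurableSpace Om]

lemma wval_ge {P : Measure Om} {B : ℝ → Om → ℝ} {x β : ℝ}
    (hB : IsBM P B x) (hβ : 0 < β) {t a b : ℝ} (ht : 0 < t)
    (ha : a < x) (hb : x < b) (haq : a ∈ Set.range ((↑) : ℚ → ℝ))
    (hbq : b ∈ Set.range ((↑) : ℚ → ℝ)) :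
    ENNReal.ofReal (Real.exp (-β * t)) *
      (1 - ENNReal.ofReal ((b - a) * (Real.sqrt (2 * π * t))⁻¹)) ≤ wval P β ratInd B := by
  classical
  haveI := hB.isProb
  set H : Om → Set ℝ := fun ω => {s : ℝ | 0 ≤ s ∧ (B s ω = a ∨ B s ω = b)} with hH
  set τ : Om → ℝ≥0∞ := fun ω =>
    if h : (H ω).Nonempty then ENNReal.ofReal (sInf (H ω)) else ⊤ with hτdef
  have hae : ∀ᵐ ω ∂P, (Continuous fun s : ℝ => B s ω) ∧ B 0 ω = x := hB.cont.and hB.init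
  have hHclosed : ∀ ω, (Continuous fun s : ℝ => B s ω) → IsClosed (H ω) := by
    intro ω hc
    have hHeq : H ω = Set.Ici 0 ∩ (fun s => B s ω) ⁻¹' {a, b} := by
      ext s
      simp only [hH, Set.mem_setOf_eq, Set.mem_inter_iff, Set.mem_Ici, Set.mem_preimage,
        Set.mem_insert_iff, Set.mem_singleton_iff]
    rw [hHeq]
    exact isClosed_Ici.inter (IsClosed.preimage hc ((Set.finite_singleton b).insert a).isClosed)
  have hInfMem : ∀ ω, (Continuous fun s : ℝ => B s ω) → (H ω).Nonempty → sInf (H ω) ∈ H ω := by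
    intro ω hc hne
    exact (hHclosed ω hc).csInf_mem hne ⟨0, fun s hs => hs.1⟩
  have hit : ∀ ω, (Continuous fun s : ℝ => B s ω) → B 0 ω = x → ∀ u : ℝ, 0 ≤ u →
      (B u ω ≤ a ∨ b ≤ B u ω) → ∃ s, 0 ≤ s ∧ s ≤ u ∧ (B s ω = a ∨ B s ω = b) := by
    intro ω hc h0 u hu hK
    rcases hK with hKa | hKb
    · have hmem : a ∈ Set.Icc (B u ω) (B 0 ω) := ⟨hKa, by rw [h0]; exact ha.le⟩
      obtain ⟨s, hsI, hs⟩ := intermediate_value_Icc' hu hc.continuousOn hmem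
      exact ⟨s, hsI.1, hsI.2, Or.inl hs⟩
    · have hmem : b ∈ Set.Icc (B 0 ω) (B u ω) := ⟨by rw [h0]; exact hb.le, hKb⟩
      obtain ⟨s, hsI, hs⟩ := intermediate_value_Icc hu hc.continuousOn hmem
      exact ⟨s, hsI.1, hsI.2, Or.inr hs⟩
  have hstop : IsStopTime (filtB P B) τ := by
    intro u
    by_cases hu : 0 < u
    · set D : Set ℝ := {s : ℝ | 0 ≤ s ∧ s ≤ u ∧ (s = u ∨ ∃ q : ℚ, (q : ℝ) = s)} with hD
      have hDcnt : D.Countable := by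
        apply Set.Countable.mono ?_
          ((Set.countable_singleton u).union (Set.countable_range ((↑) : ℚ → ℝ)))
        rintro s ⟨_, _, hs | ⟨q, hq⟩⟩
        · exact Or.inl hs
        · exact Or.inr ⟨q, hq⟩
      set M : Set Om := ⋂ n : ℕ, ⋃ s ∈ D,
        ({ω | b - 1/(n+1) < B s ω} ∪ {ω | B s ω < a + 1/(n+1)}) with hM
      have hMmeas : MeasurableSet[filtB P B u] M := by
        apply MeasurableSet.iInter; intro n
        apply MeasurableSet.biUnion hDcnt; intro s hs
        have hle : MeasurableSpace.comap (B s) inferInstance ≤ filtB P B u :=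
          le_trans (le_iSup (fun s : {s : ℝ // s ≤ u} =>
            MeasurableSpace.comap (B s.1) inferInstance) ⟨s, hs.2.1⟩) le_sup_left
        exact MeasurableSet.union (hle _ ⟨Set.Ioi (b - 1/(n+1)), measurableSet_Ioi, rfl⟩)
          (hle _ ⟨Set.Iio (a + 1/(n+1)), measurableSet_Iio, rfl⟩)
      have hiff : ∀ ω, (Continuous fun s : ℝ => B s ω) → B 0 ω = x →
          (τ ω ≤ ENNReal.ofReal u ↔ ω ∈ M) := by
        intro ω hc h0
        constructor
        · intro hτu
          by_cases hne : (H ω).Nonempty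
          · have hsmem : sInf (H ω) ∈ H ω := hInfMem ω hc hne
            have hsu : sInf (H ω) ≤ u := by
              rw [hτdef] at hτu; simp only [dif_pos hne] at hτu
              exact (ENNReal.ofReal_le_ofReal_iff hu.le).1 hτu
            rw [hM, Set.mem_iInter]
            intro n
            have hn1 : (0:ℝ) < 1/(n+1) := by positivity
            obtain ⟨δ, hδ, hδp⟩ : ∃ δ > 0, ∀ s : ℝ, |s - sInf (H ω)| < δ →
                |B s ω - B (sInf (H ω)) ω| < 1/(n+1) := by
              obtain ⟨δ, hδ, h⟩ := Metric.continuous_iff.1 hc (sInf (H ω)) (1/(n+1)) hn1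
              exact ⟨δ, hδ, fun s hs => by
                simpa [Real.dist_eq] using h s (by simpa [Real.dist_eq] using hs)⟩
            rcases eq_or_lt_of_le hsu with hequ | hltu
            · have huD : u ∈ D := ⟨hu.le, le_rfl, Or.inl rfl⟩
              refine Set.mem_biUnion huD ?_
              rcases hsmem.2 with hA | hBb
              · right; simp only [Set.mem_setOf_eq]
                rw [← hequ, hA]; linarith
              · left; simp only [Set.mem_setOf_eq]
                rw [← hequ, hBb]; linarith
            · obtain ⟨q, hq1, hq2⟩ := exists_rat_btwn (lt_min hltu (lt_add_of_pos_right _ hδ))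
              have hqD : (q:ℝ) ∈ D :=
                ⟨le_trans hsmem.1 hq1.le, (lt_min_iff.1 hq2).1.le, Or.inr ⟨q, rfl⟩⟩
              have hdist : |(q:ℝ) - sInf (H ω)| < δ := by
                rw [abs_of_pos (by linarith)]
                have h2 := (lt_min_iff.1 hq2).2; linarith
              have hBq := hδp q hdist
              refine Set.mem_biUnion hqD ?_
              rcases hsmem.2 with hA | hBb
              · right; simp only [Set.mem_setOf_eq]
                rw [hA] at hBq
                have := (abs_lt.1 hBq).2; linarith
              · left; simp only [Set.mem_setOf_eq]
                rw [hBb] at hBq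
                have := (abs_lt.1 hBq).1; linarith
          · rw [hτdef] at hτu; simp only [dif_neg hne] at hτu
            exact absurd (top_le_iff.1 hτu) ENNReal.ofReal_ne_top
        · intro hMmem
          have hcont' : ContinuousOn (fun s => B s ω) (Set.Icc 0 u) := hc.continuousOn
          obtain ⟨smax, hsmaxI, hmax⟩ :=
            isCompact_Icc.exists_isMaxOn (Set.nonempty_Icc.2 hu.le) hcont'
          obtain ⟨smin, hsminI, hmin⟩ :=
            isCompact_Icc.exists_isMinOn (Set.nonempty_Icc.2 hu.le) hcont'
          have hclaim : b ≤ B smax ω ∨ B smin ω ≤ a := by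
            by_contra hcon
            push_neg at hcon
            obtain ⟨h1, h2⟩ := hcon
            obtain ⟨n, hn⟩ := exists_nat_one_div_lt
              (lt_min_iff.2 ⟨sub_pos.2 h1, sub_pos.2 h2⟩ : (0:ℝ) < _)
            obtain ⟨s, hsD, hs⟩ := Set.mem_iUnion₂.1 (Set.mem_iInter.1 hMmem n)
            have hsI : s ∈ Set.Icc (0:ℝ) u := ⟨hsD.1, hsD.2.1⟩
            rcases hs with hs | hs
            · have hle := hmax hsI
              simp only [Set.mem_setOf_eq] at hs hle
              have := (lt_min_iff.1 hn).1; linarith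
            · have hle := hmin hsI
              simp only [Set.mem_setOf_eq] at hs hle
              have := (lt_min_iff.1 hn).2; linarith
          rcases hclaim with hbmax | hamin
          · have hmem : b ∈ Set.Icc (B 0 ω) (B smax ω) := ⟨by rw [h0]; exact hb.le, hbmax⟩
            obtain ⟨s, hsI, hs⟩ := intermediate_value_Icc hsmaxI.1 hc.continuousOn hmem
            have hne : (H ω).Nonempty := ⟨s, hsI.1, Or.inr hs⟩
            rw [hτdef]; simp only [dif_pos hne]
            apply ENNReal.ofReal_le_ofReal
            exact le_trans (csInf_le ⟨0, fun r hr => hr.1⟩ ⟨hsI.1, Or.inr hs⟩)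
              (hsI.2.trans hsmaxI.2)
          · have hmem : a ∈ Set.Icc (B smin ω) (B 0 ω) := ⟨hamin, by rw [h0]; exact ha.le⟩
            obtain ⟨s, hsI, hs⟩ := intermediate_value_Icc' hsminI.1 hc.continuousOn hmem
            have hne : (H ω).Nonempty := ⟨s, hsI.1, Or.inl hs⟩
            rw [hτdef]; simp only [dif_pos hne]
            apply ENNReal.ofReal_le_ofReal
            exact le_trans (csInf_le ⟨0, fun r hr => hr.1⟩ ⟨hsI.1, Or.inl hs⟩)
              (hsI.2.trans hsminI.2)
      refine measurableSet_of_null_diffs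
        (show nullSets P ≤ filtB P B u from le_sup_right) hMmeas ?_ ?_
      · refine measure_mono_null ?_ (ae_iff.1 hae)
        rintro ω ⟨h1, h2⟩
        simp only [Set.mem_setOf_eq, not_and]
        intro hc h0
        exact absurd ((hiff ω hc h0).1 h1) h2
      · refine measure_mono_null ?_ (ae_iff.1 hae)
        rintro ω ⟨h1, h2⟩
        simp only [Set.mem_setOf_eq, not_and]
        intro hc h0
        exact absurd ((hiff ω hc h0).2 h1) h2
    · push_neg at hu
      refine measurableSet_of_null_diffs
        (show nullSets P ≤ filtB P B u from le_sup_right) (M := (∅ : Set Om))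
        (@MeasurableSet.empty Om (filtB P B u)) ?_ (by simp)
      rw [Set.diff_empty]
      refine measure_mono_null ?_ (ae_iff.1 hae)
      intro ω hω
      simp only [Set.mem_setOf_eq, not_and]
      intro hc h0
      exfalso
      have hu0 : ENNReal.ofReal u = 0 := by
        rw [ENNReal.ofReal_eq_zero]; exact hu
      have hω' : τ ω = 0 := by
        have := hω
        simp only [Set.mem_setOf_eq, hu0, nonpos_iff_eq_zero] at this
        exact this
      by_cases hne : (H ω).Nonempty
      · rw [hτdef] at hω'; simp only [dif_pos hne] at hω'
        have h1 : sInf (H ω) ∈ H ω := hInfMem ω hc hne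
        have h2 : sInf (H ω) ≤ 0 := (ENNReal.ofReal_eq_zero.1 hω')
        have h3 : sInf (H ω) = 0 := le_antisymm h2 h1.1
        rw [h3] at h1
        rcases h1.2 with h | h <;> rw [h0] at h
        · exact absurd h (ne_of_gt ha)
        · exact absurd h (ne_of_lt hb)
      · rw [hτdef] at hω'; simp only [dif_neg hne] at hω'
        exact ENNReal.top_ne_zero hω'
  -- value bound
  set K : Set Om := {ω | B t ω ≤ a} ∪ {ω | b ≤ B t ω} with hK
  have hKmeas : MeasurableSet K :=
    ((hB.meas t) measurableSet_Iic).union ((hB.meas t) measurableSet_Ici)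
  set c : ℝ≥0∞ := ENNReal.ofReal (Real.exp (-β * t)) with hcdef
  have hpay : ∀ᵐ ω ∂P, K.indicator (fun _ => c) ω ≤ payoff β ratInd B τ ω := by
    filter_upwards [hae] with ω hω
    obtain ⟨hcont, h0⟩ := hω
    by_cases hKm : ω ∈ K
    · rw [Set.indicator_of_mem hKm]
      obtain ⟨s0, hs00, hs0u, hs0ab⟩ := hit ω hcont h0 t ht.le
        (by rcases hKm with h | h; exacts [Or.inl h, Or.inr h])
      have hne : (H ω).Nonempty := ⟨s0, hs00, hs0ab⟩
      have hsmem := hInfMem ω hcont hne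
      have hτω : τ ω = ENNReal.ofReal (sInf (H ω)) := by rw [hτdef]; simp [dif_pos hne]
      have hlt : τ ω < ⊤ := by rw [hτω]; exact ENNReal.ofReal_lt_top
      rw [payoff, Set.indicator_of_mem (show ω ∈ {ω' | τ ω' < ⊤} from hlt)]
      have htr : (τ ω).toReal = sInf (H ω) := by rw [hτω, ENNReal.toReal_ofReal hsmem.1]
      rw [htr]
      have hratInd : ratInd (B (sInf (H ω)) ω) = 1 := by
        apply Set.indicator_of_mem
        rcases hsmem.2 with h | h <;> rw [h]
        exacts [haq, hbq]
      rw [hratInd, mul_one]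
      apply ENNReal.ofReal_le_ofReal
      apply Real.exp_le_exp.2
      have hsle : sInf (H ω) ≤ t := le_trans (csInf_le ⟨0, fun r hr => hr.1⟩ ⟨hs00, hs0ab⟩) hs0u
      nlinarith
    · rw [Set.indicator_of_notMem hKm]; exact zero_le
  have hstep1 : c * P K ≤ stopVal P β ratInd B τ := by
    rw [stopVal, ← lintegral_indicator_const hKmeas c]
    exact lintegral_mono_ae hpay
  have hKbound : 1 - ENNReal.ofReal ((b - a) * (Real.sqrt (2 * π * t))⁻¹) ≤ P K := by
    have hv : Real.toNNReal t ≠ 0 := by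
      simp only [ne_eq, Real.toNNReal_eq_zero, not_le]; exact ht
    have hmap := hB.gauss 0 t le_rfl ht.le
    rw [sub_zero] at hmap
    have hmeas2 : Measurable fun ω => B t ω - B 0 ω := (hB.meas t).sub (hB.meas 0)
    have hKc : P Kᶜ ≤ ENNReal.ofReal ((b - a) * (Real.sqrt (2 * π * t))⁻¹) := by
      have hsub : Kᶜ ⊆
          ((fun ω => B t ω - B 0 ω) ⁻¹' Set.Ioo (a - x) (b - x)) ∪ {ω | ¬ B 0 ω = x} := by
        intro ω hω
        simp only [hK, Set.mem_compl_iff, Set.mem_union, Set.mem_setOf_eq, not_or, not_le] at hω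
        by_cases h0 : B 0 ω = x
        · left
          simp only [Set.mem_preimage, Set.mem_Ioo, h0]
          constructor <;> linarith [hω.1, hω.2]
        · right; exact h0
      calc P Kᶜ
          ≤ P ((fun ω => B t ω - B 0 ω) ⁻¹' Set.Ioo (a - x) (b - x)) + P {ω | ¬ B 0 ω = x} :=
            le_trans (measure_mono hsub) (measure_union_le _ _)
        _ = P ((fun ω => B t ω - B 0 ω) ⁻¹' Set.Ioo (a - x) (b - x)) := by
            rw [ae_iff.1 hB.init, add_zero]
        _ = gaussianReal 0 (Real.toNNReal t) (Set.Ioo (a - x) (b - x)) := by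
            rw [← Measure.map_apply hmeas2 measurableSet_Ioo, hmap]
        _ ≤ ENNReal.ofReal ((b - x - (a - x)) * (Real.sqrt (2 * π * (Real.toNNReal t : ℝ)))⁻¹) :=
            gaussianReal_Ioo_le hv _ _
        _ = ENNReal.ofReal ((b - a) * (Real.sqrt (2 * π * t))⁻¹) := by
            rw [Real.coe_toNNReal t ht.le]; ring_nf
    have h1 : P K + P Kᶜ = 1 := by
      rw [measure_add_measure_compl hKmeas]; exact measure_univ
    calc (1:ℝ≥0∞) - ENNReal.ofReal ((b - a) * (Real.sqrt (2 * π * t))⁻¹)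
        ≤ 1 - P Kᶜ := tsub_le_tsub_left hKc 1
      _ = P K := by rw [← h1, ENNReal.add_sub_cancel_right (measure_ne_top P _)]
  calc ENNReal.ofReal (Real.exp (-β * t)) *
      (1 - ENNReal.ofReal ((b - a) * (Real.sqrt (2 * π * t))⁻¹))
      ≤ c * P K := mul_le_mul_right hKbound c
    _ ≤ stopVal P β ratInd B τ := hstep1
    _ ≤ wval P β ratInd B := le_iSup₂_of_le τ hstop le_rfl

end Part1

/-- for the payoff `g = 1_ℚ`, the classical optimal stopping value is
`w(x) = 1`, while every stopping time taking values in the event times of an independent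
rate-`λ` Poisson process has zero expected payoff, so the Poisson stopping value is
`V_λ(x) = 0 < w(x)`. -/
theorem statement18 {Om : Type*} [MeasurableSpace Om] (P : Measure Om) (B : ℝ → Om → ℝ)
    (x β lam : ℝ) (E : ℕ → Om → ℝ)
    (hβ : 0 < β) (hlam : 0 < lam) (hB : IsBM P B x) (hE : IsExpSeq P E lam B) :
    wval P β ratInd B = 1 ∧
    (∀ τ : Om → ℝ≥0∞,
      IsStopTime (filt P B (fun n ω => ENNReal.ofReal (expSum E n ω))) τ →
      ValuesIn P (fun n ω => ENNReal.ofReal (expSum E n ω)) τ →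
      stopVal P β ratInd B τ = 0) ∧
    Vval P β ratInd B B (fun n ω => ENNReal.ofReal (expSum E n ω)) = 0 := by
  haveI := hB.isProb
  refine ⟨?_, fun τ _ hv => stopVal_eq_zero hB hE τ hv, ?_⟩
  · -- wval = 1
    refine le_antisymm ?_ ?_
    · exact iSup_le fun τ => iSup_le fun _ => stopVal_le_one hβ τ
    · -- 1 ≤ wval
      set t : ℕ → ℝ := fun n => 1 / ((n : ℝ) + 1) with htdef
      have htpos : ∀ n, 0 < t n := fun n => by positivity
      have htle1 : ∀ n, t n ≤ 1 := by
        intro n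
        rw [htdef]
        rw [div_le_one (by positivity)]
        simp
      set f : ℕ → ℝ≥0∞ := fun n => ENNReal.ofReal (Real.exp (-β * t n)) *
        (1 - ENNReal.ofReal (2 * (t n)^2 * (Real.sqrt (2 * π * t n))⁻¹)) with hfdef
      have hlow : ∀ n : ℕ, f n ≤ wval P β ratInd B := by
        intro n
        have htn := htpos n
        obtain ⟨qa, hqa1, hqa2⟩ := exists_rat_btwn (show x - (t n)^2 < x by nlinarith)
        obtain ⟨qb, hqb1, hqb2⟩ := exists_rat_btwn (show x < x + (t n)^2 by nlinarith)
        have hw := wval_ge hB hβ htn hqa2 hqb1 ⟨qa, rfl⟩ ⟨qb, rfl⟩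
        refine le_trans ?_ hw
        apply mul_le_mul_right
        apply tsub_le_tsub_left
        apply ENNReal.ofReal_le_ofReal
        apply mul_le_mul_of_nonneg_right ?_ (by positivity)
        nlinarith
      have htn0 : Filter.Tendsto t Filter.atTop (nhds 0) :=
        tendsto_one_div_add_atTop_nhds_zero_nat
      have h1 : Filter.Tendsto (fun n => ENNReal.ofReal (Real.exp (-β * t n)))
          Filter.atTop (nhds 1) := by
        have hc : Continuous fun s : ℝ => ENNReal.ofReal (Real.exp (-β * s)) :=
          ENNReal.continuous_ofReal.comp (Real.continuous_exp.comp
            (continuous_const.mul continuous_id))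
        have := (hc.tendsto 0).comp htn0
        simpa [Function.comp_def] using this
      have h2 : Filter.Tendsto (fun n => (2 * (t n)^2 * (Real.sqrt (2 * π * t n))⁻¹ : ℝ))
          Filter.atTop (nhds 0) := by
        have hbnd : ∀ n, 2 * (t n)^2 * (Real.sqrt (2 * π * t n))⁻¹ ≤ 2 * Real.sqrt (t n) := by
          intro n
          have htn := htpos n
          have hsq : (0:ℝ) < Real.sqrt (t n) := Real.sqrt_pos.2 htn
          have hsqrtle : Real.sqrt (t n) ≤ Real.sqrt (2 * π * t n) :=
            Real.sqrt_le_sqrt (by nlinarith [Real.pi_gt_three])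
          have key : t n * (Real.sqrt (t n))⁻¹ = Real.sqrt (t n) := by
            rw [show t n = Real.sqrt (t n) * Real.sqrt (t n) from
              (Real.mul_self_sqrt htn.le).symm]
            field_simp
            rw [Real.sqrt_sq hsq.le]
          calc 2 * (t n)^2 * (Real.sqrt (2 * π * t n))⁻¹
              ≤ 2 * (t n)^2 * (Real.sqrt (t n))⁻¹ := by
                apply mul_le_mul_of_nonneg_left (inv_anti₀ hsq hsqrtle) (by positivity)
            _ ≤ 2 * t n * (Real.sqrt (t n))⁻¹ := by
                apply mul_le_mul_of_nonneg_right ?_ (by positivity)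
                nlinarith [htle1 n]
            _ = 2 * Real.sqrt (t n) := by rw [mul_assoc, key]
        have h2s : Filter.Tendsto (fun n => 2 * Real.sqrt (t n)) Filter.atTop (nhds 0) := by
          have := ((Real.continuous_sqrt.tendsto 0).comp htn0).const_mul 2
          simpa using this
        exact squeeze_zero (fun n => by positivity) hbnd h2s
      have h3 : Filter.Tendsto
          (fun n => 1 - ENNReal.ofReal (2 * (t n)^2 * (Real.sqrt (2 * π * t n))⁻¹))
          Filter.atTop (nhds 1) := by
        have := ENNReal.Tendsto.sub
          (tendsto_const_nhds : Filter.Tendsto (fun _ : ℕ => (1:ℝ≥0∞)) Filter.atTop (nhds 1))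
          (ENNReal.tendsto_ofReal h2) (Or.inl ENNReal.one_ne_top)
        simpa using this
      have htend : Filter.Tendsto f Filter.atTop (nhds 1) := by
        have := ENNReal.Tendsto.mul h1 (Or.inl one_ne_zero) h3 (Or.inr ENNReal.one_ne_top)
        simpa only [one_mul] using this
      exact le_of_tendsto' htend hlow
  · -- Vval = 0
    refine le_antisymm ?_ zero_le
    exact iSup_le fun τ => iSup_le fun _ => iSup_le fun hv =>
      le_of_eq (stopVal_eq_zero hB hE τ hv)

end PoissonOS
end
end
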